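/- arXiv:1601.05003 — 6 statements merged into one kernel-verified Lean document; each statement's English description precedes it below -/
import Mathlib

section
/- Let G be a graph and let B be the set of special branching points of G that have at least two legs attached. Then DP(G) ≥ |B|. More precisely, for every detection pair (W,L) of G and every x ∈ B, the set consisting of x together with all vertices on legs attached to x contains at least one detector (element of W ∪ L), and these sets are pairwise disjoint for distinct elements of B. -/
open SimpleGraph

namespace DetPair

variable {V : Type*}

/-- `u` is dominated by some watcher in `W` (closed neighbourhood). -/
def Dominated (G : SimpleGraph V) (W : Set V) (u : V) : Prop :=
  ∃ w ∈ W, w = u ∨ G.Adj w u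

/-- `(W, L)` is a detection pair of `G` (pairwise formulation). -/
def IsDetectionPair (G : SimpleGraph V) (W L : Set V) : Prop :=
  ∀ u v : V, u ≠ v →
    Dominated G W u ∨ Dominated G W v ∨ ∃ l ∈ L, G.dist u l ≠ G.dist v l

/-- A vertex `u` is distinguished by the pair `(W, L)`. -/
def Distinguished (G : SimpleGraph V) (W L : Set V) (u : V) : Prop :=
  Dominated G W u ∨ ∀ v, v ≠ u → Dominated G W v ∨ ∃ l ∈ L, G.dist u l ≠ G.dist v l

def IsResolving (G : SimpleGraph V) (L : Set V) : Prop :=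
  ∀ u v : V, u ≠ v → ∃ l ∈ L, G.dist u l ≠ G.dist v l

def IsDominating (G : SimpleGraph V) (W : Set V) : Prop :=
  ∀ u, Dominated G W u

/-- `DP G`: minimum size of a detection pair. -/
noncomputable def DP (G : SimpleGraph V) : ℕ :=
  sInf {n | ∃ W L : Set V, IsDetectionPair G W L ∧ W.ncard + L.ncard = n}

/-- `MD G`: metric dimension. -/
noncomputable def MD (G : SimpleGraph V) : ℕ :=
  sInf {n | ∃ L : Set V, IsResolving G L ∧ L.ncard = n}

/-- `gamma G`: domination number. -/
noncomputable def gamma (G : SimpleGraph V) : ℕ :=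
  sInf {n | ∃ W : Set V, IsDominating G W ∧ W.ncard = n}

/-- `p` is a leg attached to `x`: a path starting at a neighbour of `x` and ending at a
leaf, all of whose vertices except the last have degree 2. -/
def IsLeg [Fintype V] (G : SimpleGraph V) [DecidableRel G.Adj] (x : V) (p : List V) : Prop :=
  p ≠ [] ∧ p.Nodup ∧ x ∉ p ∧ List.Chain G.Adj x p ∧
  (∃ y, p.getLast? = some y ∧ G.degree y = 1) ∧
  ∀ v ∈ p.dropLast, G.degree v = 2

/-- A special branching point: a vertex of degree at least 3 with a leg attached. -/
def IsSpecialBranchingPoint [Fintype V] (G : SimpleGraph V) [DecidableRel G.Adj]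
    (x : V) : Prop :=
  3 ≤ G.degree x ∧ ∃ p, IsLeg G x p

/-- `x` together with all vertices of legs attached to `x`. -/
def LegSet [Fintype V] (G : SimpleGraph V) [DecidableRel G.Adj] (x : V) : Set V :=
  insert x {v | ∃ p, IsLeg G x p ∧ v ∈ p}


section Aux
variable [Fintype V] {G : SimpleGraph V} [DecidableRel G.Adj]

lemma deg_le_two_of_mem_leg {x v : V} {p : List V} (hp : IsLeg G x p) (hv : v ∈ p) :
    G.degree v ≤ 2 := by
  obtain ⟨hne, _, _, _, ⟨y, hy, hdy⟩, hdrop⟩ := hp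
  rw [List.getLast?_eq_getLast hne] at hy
  have hy' : p.getLast hne = y := Option.some_injective _ hy
  have hsplit : p = p.dropLast ++ [p.getLast hne] := (List.dropLast_append_getLast hne).symm
  rw [hsplit, List.mem_append, List.mem_singleton] at hv
  rcases hv with hv | hv
  · exact le_of_eq (hdrop v hv)
  · have : G.degree v = 1 := by rw [hv, hy']; exact hdy
    omega

/-- closure: neighbours of leg vertices stay in the leg or go to the root. -/
lemma closure_aux (q : List V) : ∀ (z : V), List.Chain G.Adj z q → (z :: q).Nodup →
    (∃ y, q.getLast? = some y ∧ G.degree y = 1) →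
    (∀ v ∈ q.dropLast, G.degree v = 2) →
    ∀ u ∈ q, ∀ w, G.Adj u w → w = z ∨ w ∈ q := by
  classical
  induction q with
  | nil => simp
  | cons a rest ih =>
    intro z hchain hnodup hlast hdrop u hu w hadj
    replace hchain := List.chain_cons.mp hchain
    obtain ⟨hza, hrest⟩ := hchain
    rcases List.mem_cons.mp hu with rfl | hu
    · -- u = a
      cases rest with
      | nil =>
        obtain ⟨y, hy, hdy⟩ := hlast
        have hyu : y = u := by
          have : some u = some y := hy
          exact (Option.some_injective _ this).symm
        rw [hyu] at hdy
        have hz : z ∈ G.neighborFinset u := by simpa using hza.symm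
        have hw : w ∈ G.neighborFinset u := by simpa using hadj
        left
        exact Finset.card_le_one.mp (le_of_eq hdy) w hw z hz
      | cons b rest' =>
        have hdeg : G.degree u = 2 := hdrop u (by simp)
        have hzb : z ≠ b := by
          have hzm : z ∉ u :: b :: rest' := (List.nodup_cons.mp hnodup).1
          intro h; subst h; exact hzm (by simp)
        have hsub : ({z, b} : Finset V) ⊆ G.neighborFinset u := by
          intro t ht
          rcases Finset.mem_insert.mp ht with rfl | ht
          · simpa using hza.symm
          · rw [Finset.mem_singleton] at ht; subst ht
            simpa using (List.chain_cons.mp hrest).1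
        have hcard : (G.neighborFinset u).card ≤ ({z, b} : Finset V).card := by
          rw [Finset.card_insert_of_notMem (by simpa using hzb), Finset.card_singleton]
          rw [← G.card_neighborFinset_eq_degree] at hdeg
          omega
        have heq := Finset.eq_of_subset_of_card_le hsub hcard
        have hw : w ∈ ({z, b} : Finset V) := by rw [heq]; simpa using hadj
        rcases Finset.mem_insert.mp hw with rfl | hw
        · left; rfl
        · right; rw [Finset.mem_singleton] at hw; subst hw; simp
    · -- u ∈ rest
      have hrne : rest ≠ [] := by rintro rfl; simp at hu
      obtain ⟨b, rest', rfl⟩ := List.exists_cons_of_ne_nil hrne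
      have hlast' : ∃ y, (b :: rest').getLast? = some y ∧ G.degree y = 1 := by
        obtain ⟨y, hy, hdy⟩ := hlast
        exact ⟨y, by rw [← List.getLast?_cons_cons]; exact hy, hdy⟩
      have hdrop' : ∀ v ∈ (b :: rest').dropLast, G.degree v = 2 := by
        intro v hv
        exact hdrop v (by rw [List.dropLast_cons₂]; exact List.mem_cons_of_mem a hv)
      have := ih a hrest (by simp at hnodup ⊢; tauto) hlast' hdrop' u hu w hadj
      rcases this with rfl | h
      · right; simp
      · right; exact List.mem_cons_of_mem _ h

lemma closure_of_leg {x : V} {q : List V} (hq : IsLeg G x q) :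
    ∀ u ∈ q, ∀ w, G.Adj u w → w = x ∨ w ∈ q := by
  obtain ⟨hne, hnd, hxq, hch, hlast, hdrop⟩ := hq
  exact closure_aux q x hch (by simp [hnd, hxq]) hlast hdrop

omit [Fintype V] [DecidableRel G.Adj] in
lemma no_escape {y : V} {q : List V}
    (hcl : ∀ u ∈ q, ∀ w, G.Adj u w → w = y ∨ w ∈ q) :
    ∀ (p : List V) (z : V), z ≠ y → z ∉ q → y ∉ p → List.Chain G.Adj z p →
    ∀ v ∈ p, v ∉ q := by
  intro p
  induction p with
  | nil => simp
  | cons a rest ih =>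
    intro z hzy hzq hyp hchain v hv hvq
    replace hchain := List.chain_cons.mp hchain
    obtain ⟨hza, hrest⟩ := hchain
    by_cases haq : a ∈ q
    · rcases hcl a haq z hza.symm with rfl | h
      · exact hzy rfl
      · exact hzq h
    · rcases List.mem_cons.mp hv with rfl | hv
      · exact haq hvq
      · have hay : a ≠ y := by intro h; subst h; exact hyp (by simp)
        exact ih a hay haq (fun h => hyp (List.mem_cons_of_mem _ h)) hrest v hv hvq

omit [Fintype V] [DecidableRel G.Adj] in
lemma dist_through {x l : V} {p : List V}
    (hcl : ∀ u ∈ p, ∀ w, G.Adj u w → w = x ∨ w ∈ p)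
    (hlp : l ∉ p) :
    ∀ (n : ℕ) {u : V} (w : G.Walk u l), w.length ≤ n → u ∈ p → 1 + G.dist x l ≤ w.length := by
  intro n
  induction n with
  | zero =>
    intro u w hw hu
    cases w with
    | nil => exact absurd hu hlp
    | cons h w' => simp at hw
  | succ n ih =>
    intro u w hw hu
    cases w with
    | nil => exact absurd hu hlp
    | @cons _ b _ hadj w' =>
      rcases hcl u hu b hadj with hbx | hb
      · subst hbx
        have hd := SimpleGraph.dist_le w'
        simp only [SimpleGraph.Walk.length_cons]
        omega
      · have := ih w' (by simp only [SimpleGraph.Walk.length_cons] at hw; omega) hb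
        simp only [SimpleGraph.Walk.length_cons]
        omega

lemma dist_leg_eq (hc : G.Connected) {x l u : V} {p : List V} (hp : IsLeg G x p)
    (hadj : G.Adj x u) (hu : u ∈ p) (hlp : l ∉ p) :
    G.dist u l = 1 + G.dist x l := by
  have hcl := closure_of_leg hp
  apply le_antisymm
  · obtain ⟨w, hw⟩ := hc.exists_walk_length_eq_dist x l
    have := SimpleGraph.dist_le (SimpleGraph.Walk.cons hadj.symm w)
    simp only [SimpleGraph.Walk.length_cons] at this
    omega
  · obtain ⟨w, hw⟩ := hc.exists_walk_length_eq_dist u l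
    rw [← hw]
    exact dist_through hcl hlp w.length w le_rfl hu


lemma legSet_disjoint {x y : V} (hx : 3 ≤ G.degree x) (hy : 3 ≤ G.degree y) (hxy : x ≠ y) :
    Disjoint (LegSet G x) (LegSet G y) := by
  rw [Set.disjoint_left]
  intro v hvx hvy
  rcases Set.mem_insert_iff.mp hvx with rfl | ⟨p, hp, hvp⟩
  · rcases Set.mem_insert_iff.mp hvy with h | ⟨q, hq, hvq⟩
    · exact hxy h
    · have := deg_le_two_of_mem_leg hq hvq
      omega
  · rcases Set.mem_insert_iff.mp hvy with rfl | ⟨q, hq, hvq⟩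
    · have := deg_le_two_of_mem_leg hp hvp
      omega
    · have hxq : x ∉ q := fun h => by have := deg_le_two_of_mem_leg hq h; omega
      have hyp : y ∉ p := fun h => by have := deg_le_two_of_mem_leg hp h; omega
      exact no_escape (closure_of_leg hq) p x hxy hxq hyp hp.2.2.2.1 v hvp hvq

lemma detector_in_legSet (hc : G.Connected) {W L : Set V} (hdp : IsDetectionPair G W L)
    {x : V} {p q : List V} (hp : IsLeg G x p) (hq : IsLeg G x q)
    (hpq : p.Disjoint q) : ∃ d ∈ W ∪ L, d ∈ LegSet G x := by
  obtain ⟨a, p', rfl⟩ := List.exists_cons_of_ne_nil hp.1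
  obtain ⟨b, q', rfl⟩ := List.exists_cons_of_ne_nil hq.1
  have hxa : G.Adj x a := (List.chain_cons.mp hp.2.2.2.1).1
  have hxb : G.Adj x b := (List.chain_cons.mp hq.2.2.2.1).1
  have hamem : a ∈ a :: p' := List.mem_cons_self
  have hbmem : b ∈ b :: q' := List.mem_cons_self
  have hab : a ≠ b := fun h => hpq hamem (by rw [h]; exact hbmem)
  have memp : ∀ v ∈ a :: p', v ∈ LegSet G x :=
    fun v hv => Set.mem_insert_iff.mpr (Or.inr ⟨_, hp, hv⟩)
  have memq : ∀ v ∈ b :: q', v ∈ LegSet G x :=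
    fun v hv => Set.mem_insert_iff.mpr (Or.inr ⟨_, hq, hv⟩)
  rcases hdp a b hab with ⟨w, hwW, hw⟩ | ⟨w, hwW, hw⟩ | ⟨l, hlL, hld⟩
  · refine ⟨w, Set.mem_union_left _ hwW, ?_⟩
    rcases hw with rfl | hadj
    · exact memp _ hamem
    · rcases closure_of_leg hp a hamem w hadj.symm with rfl | hwp
      · exact Set.mem_insert _ _
      · exact memp _ hwp
  · refine ⟨w, Set.mem_union_left _ hwW, ?_⟩
    rcases hw with rfl | hadj
    · exact memq _ hbmem
    · rcases closure_of_leg hq b hbmem w hadj.symm with rfl | hwq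
      · exact Set.mem_insert _ _
      · exact memq _ hwq
  · by_cases hl : l ∈ LegSet G x
    · exact ⟨l, Set.mem_union_right _ hlL, hl⟩
    · exfalso
      have h1 : G.dist a l = 1 + G.dist x l :=
        dist_leg_eq hc hp hxa hamem (fun h => hl (memp _ h))
      have h2 : G.dist b l = 1 + G.dist x l :=
        dist_leg_eq hc hq hxb hbmem (fun h => hl (memq _ h))
      exact hld (h1.trans h2.symm)

end Aux

/-- DP(G) ≥ |B| where B is the set of special branching points with at least two
(disjoint) legs attached; more precisely each leg-region of a point of `B` contains a
detector and these regions are pairwise disjoint. -/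
theorem stmt2 [Fintype V] (G : SimpleGraph V) [DecidableRel G.Adj] (hc : G.Connected)
    (B : Set V)
    (hB : B = {x | 3 ≤ G.degree x ∧
      ∃ p q : List V, IsLeg G x p ∧ IsLeg G x q ∧ p.Disjoint q}) :
    B.ncard ≤ DP G ∧
    ∀ W L : Set V, IsDetectionPair G W L →
      (∀ x ∈ B, ∃ d ∈ W ∪ L, d ∈ LegSet G x) ∧
      (∀ x ∈ B, ∀ y ∈ B, x ≠ y → Disjoint (LegSet G x) (LegSet G y)) := by
  have hdisj : ∀ x ∈ B, ∀ y ∈ B, x ≠ y → Disjoint (LegSet G x) (LegSet G y) := by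
    intro x hx y hy hxy
    rw [hB] at hx hy
    exact legSet_disjoint hx.1 hy.1 hxy
  have hdet : ∀ W L : Set V, IsDetectionPair G W L →
      ∀ x ∈ B, ∃ d ∈ W ∪ L, d ∈ LegSet G x := by
    intro W L hdp x hx
    rw [hB] at hx
    obtain ⟨hx3, p, q, hp, hq, hpq⟩ := hx
    exact detector_in_legSet hc hdp hp hq hpq
  refine ⟨?_, fun W L hdp => ⟨hdet W L hdp, hdisj⟩⟩
  apply le_csInf
  · exact ⟨_, Set.univ, ∅,
      fun u v h => Or.inl ⟨u, Set.mem_univ u, Or.inl rfl⟩, rfl⟩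
  · rintro n ⟨W, L, hdp, rfl⟩
    classical
    set f : V → V := fun x => if h : ∃ d ∈ W ∪ L, d ∈ LegSet G x then h.choose else x with hf
    have hfmem : ∀ x ∈ B, f x ∈ W ∪ L ∧ f x ∈ LegSet G x := by
      intro x hx
      have h := hdet W L hdp x hx
      simp only [hf, dif_pos h]
      exact ⟨h.choose_spec.1, h.choose_spec.2⟩
    have hinj : Set.InjOn f B := by
      intro x hx y hy hfeq
      by_contra hxy
      have h1 := (hfmem x hx).2
      have h2 := (hfmem y hy).2
      rw [hfeq] at h1
      exact Set.disjoint_left.mp (hdisj x hx y hy hxy) h1 h2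
    calc B.ncard ≤ (W ∪ L).ncard :=
          Set.ncard_le_ncard_of_injOn f (fun a ha => (hfmem a ha).1) hinj (Set.toFinite _)
      _ ≤ W.ncard + L.ncard := Set.ncard_union_le W L


end DetPair
end

section
/- Let x be a special branching point of a graph G with t ≥ 0 leaf neighbours and ℓ legs of length at least 2 attached to x, and let (W,L) be a detection pair of G. If x ∈ W, then at least ℓ−1 of the legs of length at least 2 attached to x contain a detector of W ∪ L. If x ∉ W, then at least t+ℓ−1 of the legs attached to x contain a detector of W ∪ L. -/
open SimpleGraph

namespace DetPair

variable {V : Type*}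

section Aux

variable [Fintype V] {G : SimpleGraph V} [DecidableRel G.Adj] {x : V} {p : List V}

lemma IsLeg.adj_head (hp : IsLeg G x p) (h : 0 < p.length) : G.Adj x (p[0]'h) := by
  have hch : List.IsChain G.Adj (x :: p) := hp.2.2.2.1
  rw [List.isChain_iff_getElem] at hch
  simpa using hch 0 (by simp; omega)

lemma IsLeg.adj_succ (hp : IsLeg G x p) {i : ℕ} (hi : i + 1 < p.length) :
    G.Adj (p[i]'(by omega)) (p[i+1]'hi) := by
  have hch : List.IsChain G.Adj (x :: p) := hp.2.2.2.1
  rw [List.isChain_iff_getElem] at hch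
  exact hch (i+1) (by simp; omega)

lemma IsLeg.adj_prev (hp : IsLeg G x p) {i : ℕ} (hi : i < p.length) :
    G.Adj ((x::p)[i]'(by simp; omega)) (p[i]'hi) := by
  cases i with
  | zero => simpa using hp.adj_head hi
  | succ j => simpa using hp.adj_succ hi

lemma IsLeg.adj_cases (hp : IsLeg G x p) {i : ℕ} (hi : i < p.length) {u : V}
    (hu : G.Adj (p[i]'hi) u) :
    u = (x::p)[i]'(by simp; omega) ∨ ∃ h : i + 1 < p.length, u = p[i+1]'h := by
  classical
  have hprev := hp.adj_prev hi
  by_cases hlast : i + 1 < p.length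
  · -- middle vertex: degree 2
    have hmem : (p[i]'hi) ∈ p.dropLast := by
      have h1 : p.dropLast[i]'(by rw [List.length_dropLast]; omega) = p[i]'hi :=
        List.getElem_dropLast ..
      rw [← h1]; exact List.getElem_mem _
    have hdeg2 : (G.neighborFinset (p[i]'hi)).card = 2 := hp.2.2.2.2.2 _ hmem
    have hnext : G.Adj (p[i]'hi) (p[i+1]'hlast) := hp.adj_succ hlast
    have hnd : (x::p).Nodup := List.nodup_cons.2 ⟨hp.2.2.1, hp.2.1⟩
    have hne : ((x::p)[i]'(by simp; omega)) ≠ (p[i+1]'hlast) := by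
      have h2 : (x::p)[i+1]'(by simp; omega) = p[i]'hi := List.getElem_cons_succ ..
      have h3 : (x::p)[i+2]'(by simp; omega) = p[i+1]'hlast := List.getElem_cons_succ ..
      rw [← h3]
      intro h
      have := hnd.getElem_inj_iff.mp h
      omega
    have hsub : ({(x::p)[i]'(by simp; omega), p[i+1]'hlast} : Finset V)
        ⊆ G.neighborFinset (p[i]'hi) := by
      intro z hz
      rw [Finset.mem_insert, Finset.mem_singleton] at hz
      rw [SimpleGraph.mem_neighborFinset]
      rcases hz with rfl | rfl
      · exact hprev.symm
      · exact hnext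
    have heq := Finset.eq_of_subset_of_card_le hsub (by rw [hdeg2, Finset.card_pair hne])
    have hu' : u ∈ G.neighborFinset (p[i]'hi) := (SimpleGraph.mem_neighborFinset ..).2 hu
    rw [← heq, Finset.mem_insert, Finset.mem_singleton] at hu'
    rcases hu' with rfl | rfl
    · exact Or.inl rfl
    · exact Or.inr ⟨hlast, rfl⟩
  · -- last vertex: degree 1
    left
    obtain ⟨y, hy, hy1⟩ := hp.2.2.2.2.1
    have hyl : y = p[i]'hi := by
      have hne : p ≠ [] := hp.1
      rw [List.getLast?_eq_getLast hne, Option.some_inj] at hy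
      rw [← hy, List.getLast_eq_getElem]
      congr 1
      omega
    rw [hyl] at hy1
    have hdeg1 : (G.neighborFinset (p[i]'hi)).card = 1 := hy1
    obtain ⟨a, ha⟩ := Finset.card_eq_one.mp hdeg1
    have h1 : ((x::p)[i]'(by simp; omega)) ∈ G.neighborFinset (p[i]'hi) :=
      (SimpleGraph.mem_neighborFinset ..).2 hprev.symm
    have h2 : u ∈ G.neighborFinset (p[i]'hi) := (SimpleGraph.mem_neighborFinset ..).2 hu
    rw [ha, Finset.mem_singleton] at h1 h2
    rw [h2, h1]

lemma IsLeg.walk_length_ge (hp : IsLeg G x p) {l : V} (hl : l ∉ p) :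
    ∀ (n i : ℕ) (hi : i < p.length) (w : G.Walk (p[i]'hi) l), w.length = n →
      G.dist x l + (i + 1) ≤ n := by
  intro n
  induction n using Nat.strong_induction_on with
  | _ n ih =>
    intro i hi w hw
    cases w with
    | nil => exact absurd (List.getElem_mem hi) hl
    | @cons _ u _ h w' =>
      rename_i hw'
      rcases hp.adj_cases hi h with h1 | ⟨h2, h3⟩
      · cases i with
        | zero =>
          simp only [List.getElem_cons_zero] at h1
          subst h1
          have := SimpleGraph.dist_le w'
          simp only [SimpleGraph.Walk.length_cons] at hw
          omega
        | succ j =>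
          rw [List.getElem_cons_succ] at h1
          subst h1
          simp only [SimpleGraph.Walk.length_cons] at hw
          have := ih w'.length (by omega) j (by omega) w' rfl
          omega
      · subst h3
        simp only [SimpleGraph.Walk.length_cons] at hw
        have := ih w'.length (by omega) (i+1) h2 w' rfl
        omega

lemma IsLeg.exists_walk (hp : IsLeg G x p) :
    ∀ (i : ℕ) (hi : i < p.length), ∃ w : G.Walk x (p[i]'hi), w.length = i + 1
  | 0, hi => ⟨(hp.adj_head hi).toWalk, rfl⟩
  | (i+1), hi => by
    obtain ⟨w, hw⟩ := hp.exists_walk i (by omega)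
    exact ⟨w.concat (hp.adj_succ hi), by rw [SimpleGraph.Walk.length_concat, hw]⟩

lemma IsLeg.dist_eq (hc : G.Connected) (hp : IsLeg G x p) {l : V} (hl : l ∉ p)
    {i : ℕ} (hi : i < p.length) : G.dist (p[i]'hi) l = G.dist x l + (i + 1) := by
  refine le_antisymm ?_ ?_
  · obtain ⟨w, hw⟩ := hp.exists_walk i hi
    calc G.dist (p[i]'hi) l ≤ G.dist (p[i]'hi) x + G.dist x l := hc.dist_triangle
    _ ≤ (i + 1) + G.dist x l := by
        have := SimpleGraph.dist_le w
        rw [hw] at this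
        rw [SimpleGraph.dist_comm]
        omega
    _ = G.dist x l + (i + 1) := by omega
  · obtain ⟨w, hw⟩ := hc.exists_walk_length_eq_dist (p[i]'hi) l
    have := hp.walk_length_ge hl w.length i hi w rfl
    omega

lemma IsLeg.not_dominated (hp : IsLeg G x p) {W : Set V} (hW : ∀ v ∈ p, v ∉ W)
    {i : ℕ} (hi : i < p.length) (h0 : i = 0 → x ∉ W) : ¬ Dominated G W (p[i]'hi) := by
  rintro ⟨w, hwW, (rfl | hadj)⟩
  · exact hW _ (List.getElem_mem hi) hwW
  · rcases hp.adj_cases hi hadj.symm with h1 | ⟨h2, h3⟩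
    · cases i with
      | zero => rw [List.getElem_cons_zero] at h1; exact h0 rfl (h1 ▸ hwW)
      | succ j =>
        rw [List.getElem_cons_succ] at h1
        exact hW w (h1 ▸ List.getElem_mem _) hwW
    · exact hW w (h3 ▸ List.getElem_mem _) hwW

lemma key_lemma (hc : G.Connected) {W L : Set V} (hWL : IsDetectionPair G W L)
    {p q : List V} (hp : IsLeg G x p) (hq : IsLeg G x q)
    (hpq : p.Disjoint q) {i : ℕ} (hip : i < p.length) (hiq : i < q.length)
    (hdp : ∀ v ∈ p, v ∉ W ∪ L) (hdq : ∀ v ∈ q, v ∉ W ∪ L) (h0 : i = 0 → x ∉ W) :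
    False := by
  have hWp : ∀ v ∈ p, v ∉ W := fun v hv hvW => hdp v hv (Or.inl hvW)
  have hWq : ∀ v ∈ q, v ∉ W := fun v hv hvW => hdq v hv (Or.inl hvW)
  have hne : (p[i]'hip) ≠ (q[i]'hiq) := fun h =>
    hpq (List.getElem_mem hip) (h ▸ List.getElem_mem hiq)
  rcases hWL _ _ hne with hd | hd | ⟨l, hlL, hl⟩
  · exact hp.not_dominated hWp hip h0 hd
  · exact hq.not_dominated hWq hiq h0 hd
  · have hlp : l ∉ p := fun h => hdp l h (Or.inr hlL)
    have hlq : l ∉ q := fun h => hdq l h (Or.inr hlL)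
    rw [hp.dist_eq hc hlp hip, hq.dist_eq hc hlq hiq] at hl
    exact hl rfl

lemma leaf_isLeg {b : V} (hadj : G.Adj x b) (hdeg : G.degree b = 1) : IsLeg G x [b] := by
  refine ⟨by simp, by simp, ?_, ?_, ⟨b, rfl, hdeg⟩, by simp⟩
  · simpa using hadj.ne
  · exact List.isChain_pair.mpr hadj

lemma leaf_not_mem_leg (hp : IsLeg G x p) (hlen : 2 ≤ p.length) {b : V}
    (hadj : G.Adj x b) (hdeg : G.degree b = 1) : b ∉ p := by
  classical
  intro hb
  obtain ⟨i, hi, rfl⟩ := List.getElem_of_mem hb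
  by_cases hlast : i + 1 < p.length
  · have hmem : (p[i]'hi) ∈ p.dropLast := by
      have h1 : p.dropLast[i]'(by rw [List.length_dropLast]; omega) = p[i]'hi :=
        List.getElem_dropLast ..
      rw [← h1]; exact List.getElem_mem _
    have := hp.2.2.2.2.2 _ hmem
    rw [this] at hdeg
    omega
  · -- b = p[i] is the last vertex; its unique neighbour is both x and p[i-1]
    have hi1 : 1 ≤ i := by omega
    have hprev := hp.adj_prev hi
    obtain ⟨a, ha⟩ := Finset.card_eq_one.mp (hdeg : (G.neighborFinset (p[i]'hi)).card = 1)
    have h1 : ((x::p)[i]'(by simp; omega)) ∈ G.neighborFinset (p[i]'hi) :=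
      (SimpleGraph.mem_neighborFinset ..).2 hprev.symm
    have h2 : x ∈ G.neighborFinset (p[i]'hi) := by
      rw [SimpleGraph.mem_neighborFinset]
      exact hadj.symm
    rw [ha, Finset.mem_singleton] at h1 h2
    have : ((x::p)[i]'(by simp; omega)) = x := h1.trans h2.symm
    cases i with
    | zero => omega
    | succ j =>
      rw [List.getElem_cons_succ] at this
      exact hp.2.2.1 (this ▸ List.getElem_mem _)

end Aux

/-- Lemma on legs of a special branching point: if `x` carries a watcher, at least
ℓ − 1 of the legs of length ≥ 2 contain a detector; otherwise at least t + ℓ − 1 of the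
legs attached to `x` (counting leaf neighbours as legs of length 1) contain a detector. -/
theorem stmt3 [Fintype V] (G : SimpleGraph V) [DecidableRel G.Adj] (hc : G.Connected)
    (x : V) (hx : IsSpecialBranchingPoint G x)
    (Legs : Set (List V)) (Lvs : Set V)
    (hLegs : ∀ p ∈ Legs, IsLeg G x p ∧ 2 ≤ p.length)
    (hdisj : Legs.Pairwise List.Disjoint)
    (hLvs : ∀ y ∈ Lvs, G.Adj x y ∧ G.degree y = 1)
    (W L : Set V) (hWL : IsDetectionPair G W L) :
    (x ∈ W → Legs.ncard - 1 ≤ {p ∈ Legs | ∃ v ∈ p, v ∈ W ∪ L}.ncard) ∧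
    (x ∉ W → Lvs.ncard + Legs.ncard - 1 ≤
      {p ∈ Legs | ∃ v ∈ p, v ∈ W ∪ L}.ncard + (Lvs ∩ (W ∪ L)).ncard) := by
  classical
  have hLegsFin : Legs.Finite :=
    (List.finite_length_le V (Fintype.card V)).subset
      (fun p hp => (hLegs p hp).1.2.1.length_le_card)
  set Good := {p ∈ Legs | ∃ v ∈ p, v ∈ W ∪ L} with hGoodDef
  set Bad := {p ∈ Legs | ¬ ∃ v ∈ p, v ∈ W ∪ L} with hBadDef
  have hGB : Legs = Good ∪ Bad := by
    ext p
    simp only [hGoodDef, hBadDef, Set.mem_union, Set.mem_setOf_eq]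
    constructor
    · intro hp
      by_cases h : ∃ v ∈ p, v ∈ W ∪ L
      · exact Or.inl ⟨hp, h⟩
      · exact Or.inr ⟨hp, h⟩
    · rintro (⟨h, -⟩ | ⟨h, -⟩) <;> exact h
  have hBadFin : Bad.Finite := hLegsFin.subset (fun p hp => hp.1)
  have hLegsCard : Legs.ncard ≤ Good.ncard + Bad.ncard := by
    rw [hGB]; exact Set.ncard_union_le _ _
  have hBadprop : ∀ p ∈ Bad, ∀ v ∈ p, v ∉ W ∪ L := by
    intro p hp v hv hvWL
    exact hp.2 ⟨v, hv, hvWL⟩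
  constructor
  · intro hxW
    have hsubB : Bad.Subsingleton := by
      intro p hp q hq
      by_contra hpq
      have hdj : p.Disjoint q := hdisj hp.1 hq.1 hpq
      exact key_lemma hc hWL (hLegs p hp.1).1 (hLegs q hq.1).1 hdj
        (i := 1) (by have := (hLegs p hp.1).2; omega)
        (by have := (hLegs q hq.1).2; omega)
        (hBadprop p hp) (hBadprop q hq) (by omega)
    have hB1 : Bad.ncard ≤ 1 :=
      (Set.ncard_le_one hBadFin).mpr (fun a ha b hb => hsubB ha hb)
    omega
  · intro hxW
    have h1 : Lvs.ncard ≤ (Lvs ∩ (W ∪ L)).ncard + (Lvs \ (W ∪ L)).ncard := by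
      have hsub : Lvs ⊆ (Lvs ∩ (W ∪ L)) ∪ (Lvs \ (W ∪ L)) := by
        intro v hv
        by_cases h : v ∈ W ∪ L
        · exact Or.inl ⟨hv, h⟩
        · exact Or.inr ⟨hv, h⟩
      exact le_trans (Set.ncard_le_ncard hsub (Set.toFinite _)) (Set.ncard_union_le _ _)
    have hsubB : Bad.Subsingleton := by
      intro p hp q hq
      by_contra hpq
      have hdj : p.Disjoint q := hdisj hp.1 hq.1 hpq
      exact key_lemma hc hWL (hLegs p hp.1).1 (hLegs q hq.1).1 hdj
        (i := 0) (by have := (hLegs p hp.1).2; omega)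
        (by have := (hLegs q hq.1).2; omega)
        (hBadprop p hp) (hBadprop q hq) (fun _ => hxW)
    have hsubL : (Lvs \ (W ∪ L)).Subsingleton := by
      intro a ha b hb
      by_contra hab
      obtain ⟨haL, haWL⟩ := ha
      obtain ⟨hbL, hbWL⟩ := hb
      obtain ⟨hadja, hdega⟩ := hLvs a haL
      obtain ⟨hadjb, hdegb⟩ := hLvs b hbL
      refine key_lemma hc hWL (leaf_isLeg hadja hdega) (leaf_isLeg hadjb hdegb)
        ?_ (i := 0) (by simp) (by simp) ?_ ?_ (fun _ => hxW)
      · intro z hz hz'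
        simp only [List.mem_singleton] at hz hz'
        exact hab (hz.symm.trans hz')
      · intro v hv
        simp only [List.mem_singleton] at hv
        subst hv
        exact haWL
      · intro v hv
        simp only [List.mem_singleton] at hv
        subst hv
        exact hbWL
    have hcross : ∀ p ∈ Bad, ∀ b ∈ Lvs \ (W ∪ L), False := by
      intro p hp b hb
      obtain ⟨hbLvs, hbWL⟩ := hb
      obtain ⟨hadj, hdeg⟩ := hLvs b hbLvs
      have hbp : b ∉ p := leaf_not_mem_leg (hLegs p hp.1).1 (hLegs p hp.1).2 hadj hdeg
      refine key_lemma hc hWL (hLegs p hp.1).1 (leaf_isLeg hadj hdeg)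
        ?_ (i := 0) (by have := (hLegs p hp.1).2; omega) (by simp)
        (hBadprop p hp) ?_ (fun _ => hxW)
      · intro z hz hz'
        simp only [List.mem_singleton] at hz'
        exact hbp (hz' ▸ hz)
      · intro v hv
        simp only [List.mem_singleton] at hv
        subst hv
        exact hbWL
    have hBL : Bad.ncard + (Lvs \ (W ∪ L)).ncard ≤ 1 := by
      rcases Set.eq_empty_or_nonempty Bad with hB | ⟨p, hp⟩
      · rw [hB, Set.ncard_empty]
        have := (Set.ncard_le_one (Set.toFinite (Lvs \ (W ∪ L)))).mpr
          (fun a ha b hb => hsubL ha hb)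
        omega
      · have hBLempty : (Lvs \ (W ∪ L)) = ∅ := by
          by_contra h
          obtain ⟨b, hb⟩ := Set.nonempty_iff_ne_empty.mpr h
          exact hcross p hp b hb
        rw [hBLempty, Set.ncard_empty]
        have := (Set.ncard_le_one hBadFin).mpr (fun a ha b hb => hsubB ha hb)
        omega
    omega

end DetPair
end

section
/- Let G be a graph with a special branching point x having a leg attached whose leaf is y. If (W,L) is a detection pair of G with x ∈ L, then (W, (L \ {x}) ∪ {y}) is also a detection pair of G. -/
open SimpleGraph

namespace DetPair

variable {V : Type*}

lemma exists_pred {G : SimpleGraph V} (hc : G.Connected) {u v : V} (h : u ≠ v) :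
    ∃ w, G.Adj w v ∧ G.dist u v = G.dist u w + 1 := by
  obtain ⟨p, hp⟩ := (hc u v).exists_walk_length_eq_dist
  obtain ⟨q, hq⟩ : ∃ q : G.Walk v u, q.length = G.dist u v := ⟨p.reverse, by simp [hp]⟩
  cases q with
  | nil => exact absurd rfl h
  | cons hadj q =>
    rename_i w
    refine ⟨w, hadj.symm, ?_⟩
    have h1 : G.dist u w ≤ q.length := by simpa using dist_le q.reverse
    have h2 : q.length + 1 = G.dist u v := by simpa using hq
    have h3 : G.dist u v ≤ G.dist u w + 1 := by
      have ht := hc.dist_triangle (u := u) (v := w) (w := v)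
      have : G.dist w v = 1 := dist_eq_one_iff_adj.mpr hadj.symm
      omega
    omega

lemma deg1_adj [Fintype V] {G : SimpleGraph V} [DecidableRel G.Adj] {v z : V}
    (h : G.degree v = 1) (hz : G.Adj z v) : ∀ w, G.Adj w v → w = z := by
  intro w hw
  classical
  by_contra hne
  have : ({w, z} : Finset V) ⊆ G.neighborFinset v := by
    intro a ha
    simp only [Finset.mem_insert, Finset.mem_singleton] at ha
    rcases ha with rfl | rfl <;> simp [mem_neighborFinset, hw.symm, hz.symm]
  have := Finset.card_le_card this
  rw [card_neighborFinset_eq_degree, h, Finset.card_insert_of_notMem (by simpa using hne),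
    Finset.card_singleton] at this
  omega

lemma deg2_adj [Fintype V] {G : SimpleGraph V} [DecidableRel G.Adj] {v z₁ z₂ : V}
    (h : G.degree v = 2) (h1 : G.Adj z₁ v) (h2 : G.Adj z₂ v) (hne : z₁ ≠ z₂) :
    ∀ w, G.Adj w v → w = z₁ ∨ w = z₂ := by
  intro w hw
  classical
  by_contra hne'
  push_neg at hne'
  have : ({w, z₁, z₂} : Finset V) ⊆ G.neighborFinset v := by
    intro a ha
    simp only [Finset.mem_insert, Finset.mem_singleton] at ha
    rcases ha with rfl | rfl | rfl <;> simp [mem_neighborFinset, hw.symm, h1.symm, h2.symm]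
  have hc3 := Finset.card_le_card this
  rw [card_neighborFinset_eq_degree, h] at hc3
  have : ({w, z₁, z₂} : Finset V).card = 3 := by
    rw [Finset.card_insert_of_notMem (by simp [hne'.1, hne'.2]),
      Finset.card_insert_of_notMem (by simpa using hne), Finset.card_singleton]
  omega

lemma isLeg_tail [Fintype V] {G : SimpleGraph V} [DecidableRel G.Adj] {x a : V}
    {b : V} {rest : List V} (hleg : IsLeg G x (a :: b :: rest)) :
    IsLeg G a (b :: rest) := by
  obtain ⟨-, hnd, hx, hchain, ⟨y', hy', hdy'⟩, hdrop⟩ := hleg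
  unfold List.Chain at hchain; rw [List.chain_cons] at hchain
  refine ⟨by simp, (List.nodup_cons.mp hnd).2, (List.nodup_cons.mp hnd).1, hchain.2,
    ⟨y', by simpa using hy', hdy'⟩, ?_⟩
  intro v hv
  exact hdrop v (by rw [List.dropLast_cons₂]; exact List.mem_cons_of_mem _ hv)

lemma leg_dist [Fintype V] {G : SimpleGraph V} [DecidableRel G.Adj] (hc : G.Connected)
    (p : List V) : ∀ (x : V), IsLeg G x p → ∀ u, u ∉ p → ∀ j (hj : j < p.length),
      G.dist u (p.get ⟨j, hj⟩) = G.dist u x + (j + 1) := by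
  induction p with
  | nil => exact fun x hleg => absurd rfl hleg.1
  | cons a p' ih =>
    intro x hleg u hu j hj
    have hu_a : u ≠ a := fun h => hu (h ▸ List.mem_cons_self)
    have hu_p' : u ∉ p' := fun h => hu (List.mem_cons_of_mem _ h)
    obtain ⟨-, hnd, hx, hchain, ⟨y', hy', hdy'⟩, hdrop⟩ := hleg
    unfold List.Chain at hchain; rw [List.chain_cons] at hchain
    obtain ⟨hxa, hch'⟩ := hchain
    match p' with
    | [] =>
      have hya : y' = a := by symm; simpa using hy'
      have hj0 : j = 0 := by simp at hj; omega
      subst hj0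
      simp only [List.get]
      obtain ⟨w, hwadj, hw⟩ := exists_pred hc hu_a
      rw [deg1_adj (hya ▸ hdy') hxa w hwadj] at hw
      omega
    | b :: rest =>
      have hlegp' : IsLeg G a (b :: rest) :=
        isLeg_tail ⟨by simp, hnd, hx, List.chain_cons.mpr ⟨hxa, hch'⟩, ⟨y', hy', hdy'⟩, hdrop⟩
      have hdega : G.degree a = 2 :=
        hdrop a (by rw [List.dropLast_cons₂]; exact List.mem_cons_self)
      have hab : G.Adj a b := (List.chain_cons.mp hch').1
      have hxb : x ≠ b := fun h => hx (by rw [h]; simp)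
      have hub : G.dist u b = G.dist u a + 1 := by
        have := ih a hlegp' u hu_p' 0 (by simp)
        simpa using this
      have key : G.dist u a = G.dist u x + 1 := by
        obtain ⟨w, hwadj, hw⟩ := exists_pred hc hu_a
        rcases deg2_adj hdega hxa hab.symm hxb w hwadj with rfl | rfl
        · exact hw
        · omega
      match j with
      | 0 => simpa using key
      | j + 1 =>
        have := ih a hlegp' u hu_p' j (by simpa using hj)
        simp only [List.get_cons_succ]
        rw [this, key]
        ring

lemma getLast_get {α : Type*} (l : List α) (h : l ≠ []) (y : α) (hy : l.getLast? = some y) :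
    ∃ hh : l.length - 1 < l.length, l.get ⟨l.length - 1, hh⟩ = y := by
  have hl : 0 < l.length := List.length_pos_iff.mpr h
  refine ⟨by omega, ?_⟩
  rw [List.getLast?_eq_getLast h] at hy
  rw [List.get_eq_getElem, ← List.getLast_eq_getElem h]
  exact (Option.some_injective _ hy)

lemma leg_dist_last [Fintype V] {G : SimpleGraph V} [DecidableRel G.Adj] (hc : G.Connected)
    {p : List V} {x y : V} (hleg : IsLeg G x p) (hy : p.getLast? = some y)
    {u : V} (hu : u ∉ p) : G.dist u y = G.dist u x + p.length := by
  obtain ⟨hh, hget⟩ := getLast_get p hleg.1 y hy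
  have := leg_dist hc p x hleg u hu (p.length - 1) hh
  rw [hget] at this
  have hl : 0 < p.length := List.length_pos_iff.mpr hleg.1
  omega

lemma leg_vertex_dist [Fintype V] {G : SimpleGraph V} [DecidableRel G.Adj] (hc : G.Connected)
    (p : List V) : ∀ (x : V), IsLeg G x p → ∀ y, p.getLast? = some y →
    ∀ j (hj : j < p.length), G.dist (p.get ⟨j, hj⟩) y = p.length - 1 - j := by
  induction p with
  | nil => intro x hleg; exact absurd rfl hleg.1
  | cons a p' ih =>
    intro x hleg y hy j hj
    match p' with
    | [] =>
      have hya : y = a := by symm; simpa using hy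
      have hj0 : j = 0 := by simp at hj; omega
      subst hj0; subst hya
      simp [dist_self]
    | b :: rest =>
      have hlegp' : IsLeg G a (b :: rest) := isLeg_tail hleg
      have hy' : (b :: rest).getLast? = some y := by simpa using hy
      have hanotin : a ∉ b :: rest := (List.nodup_cons.mp hleg.2.1).1
      match j with
      | 0 =>
        have := leg_dist_last hc hlegp' hy' hanotin
        rw [dist_self] at this
        simpa using this
      | j + 1 =>
        have := ih a hlegp' y hy' j (by simpa using hj)
        simp only [List.get_cons_succ]
        rw [this]
        simp only [List.length_cons]
        omega

/-- Moving a listener from a special branching point `x` to the leaf `y` of a leg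
attached to `x` keeps a detection pair. -/
theorem stmt4 [Fintype V] (G : SimpleGraph V) [DecidableRel G.Adj] (hc : G.Connected)
    (x : V) (hdeg : 3 ≤ G.degree x)
    (p : List V) (hp : IsLeg G x p) (y : V) (hy : p.getLast? = some y)
    (W L : Set V) (h : IsDetectionPair G W L) (hx : x ∈ L) :
    IsDetectionPair G W (insert y (L \ {x})) := by
  intro u v huv
  rcases h u v huv with hd | hd | ⟨l, hl, hdist⟩
  · exact Or.inl hd
  · exact Or.inr (Or.inl hd)
  by_cases hlx : l = x
  · subst hlx
    refine Or.inr (Or.inr ⟨y, Set.mem_insert _ _, ?_⟩)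
    have hlen : 0 < p.length := List.length_pos_iff.mpr hp.1
    by_cases hup : u ∈ p <;> by_cases hvp : v ∈ p
    · obtain ⟨⟨i, hi⟩, hui⟩ := List.mem_iff_get.mp hup
      obtain ⟨⟨j, hj⟩, hvj⟩ := List.mem_iff_get.mp hvp
      have hij : i ≠ j := by
        intro hq; apply huv; rw [← hui, ← hvj]; congr 1; exact Fin.ext hq
      have h1 := leg_vertex_dist hc p l hp y hy i hi
      have h2 := leg_vertex_dist hc p l hp y hy j hj
      rw [hui] at h1; rw [hvj] at h2
      omega
    · obtain ⟨⟨i, hi⟩, hui⟩ := List.mem_iff_get.mp hup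
      have h1 := leg_vertex_dist hc p l hp y hy i hi
      rw [hui] at h1
      have h2 := leg_dist_last hc hp hy hvp
      omega
    · obtain ⟨⟨j, hj⟩, hvj⟩ := List.mem_iff_get.mp hvp
      have h2 := leg_vertex_dist hc p l hp y hy j hj
      rw [hvj] at h2
      have h1 := leg_dist_last hc hp hy hup
      omega
    · have h1 := leg_dist_last hc hp hy hup
      have h2 := leg_dist_last hc hp hy hvp
      omega
  · exact Or.inr (Or.inr ⟨l, Set.mem_insert_of_mem _ ⟨hl, hlx⟩, hdist⟩)


end DetPair
end

section
/- Let T be a tree and let x be a special branching point with t leaf neighbours and ℓ legs of length at least 2 attached, with t + ℓ ≥ 2 and ℓ ≤ 1. Then any detection pair of T contains at least one detector in V_x = {x} ∪ (leaf neighbours of x) ∪ (vertices of legs of length ≥ 2 attached to x). -/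
open SimpleGraph

namespace DetPair

variable {V : Type*}

open SimpleGraph in
private lemma leg_closure [Fintype V] (G : SimpleGraph V) [DecidableRel G.Adj] :
    ∀ (c : V) (p : List V), (c :: p).Nodup → List.Chain G.Adj c p →
    (∀ v ∈ p.dropLast, G.degree v = 2) →
    (∀ y, p.getLast? = some y → G.degree y = 1) →
    ∀ a ∈ p, ∀ b, G.Adj a b → b ∈ c :: p := by
  classical
  intro c p
  induction p generalizing c with
  | nil => intro _ _ _ _ a ha; simp at ha
  | cons v rest ih =>
    intro hnd hch hdeg2 hlast a ha b hab
    simp only [List.Chain, List.isChain_cons_cons] at hch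
    obtain ⟨hcv, hch'⟩ := hch
    rcases List.mem_cons.mp ha with rfl | ha'
    · cases rest with
      | nil =>
        have hd : G.degree a = 1 := hlast a rfl
        have hsub : ({c} : Finset V) ⊆ G.neighborFinset a := by
          intro z hz
          simp only [Finset.mem_singleton] at hz
          subst hz
          rw [SimpleGraph.mem_neighborFinset]; exact hcv.symm
        have heq : ({c} : Finset V) = G.neighborFinset a :=
          Finset.eq_of_subset_of_card_le hsub
            (by rw [G.card_neighborFinset_eq_degree, hd]; simp)
        have hb : b ∈ ({c} : Finset V) := by
          rw [heq, SimpleGraph.mem_neighborFinset]; exact hab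
        simp only [Finset.mem_singleton] at hb
        subst hb
        exact List.mem_cons_self
      | cons w rest' =>
        have hd : G.degree a = 2 := hdeg2 a (by simp)
        have hcw : c ≠ w := by
          intro hcw; subst hcw
          exact (List.nodup_cons.mp hnd).1 (by simp)
        have hsub : ({c, w} : Finset V) ⊆ G.neighborFinset a := by
          intro z hz
          simp only [Finset.mem_insert, Finset.mem_singleton] at hz
          rcases hz with rfl | rfl
          · rw [SimpleGraph.mem_neighborFinset]; exact hcv.symm
          · rw [SimpleGraph.mem_neighborFinset]; exact (List.chain_cons.mp hch').1
        have heq : ({c, w} : Finset V) = G.neighborFinset a :=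
          Finset.eq_of_subset_of_card_le hsub
            (by rw [G.card_neighborFinset_eq_degree, hd, Finset.card_insert_of_notMem (by simpa using hcw)]; simp)
        have hb : b ∈ ({c, w} : Finset V) := by
          rw [heq, SimpleGraph.mem_neighborFinset]; exact hab
        simp only [Finset.mem_insert, Finset.mem_singleton] at hb
        rcases hb with rfl | rfl
        · exact List.mem_cons_self
        · simp
    · have hres : b ∈ v :: rest := by
        apply ih v (List.nodup_cons.mp hnd).2 hch' ?_ ?_ a ha' b hab
        · intro z hz
          apply hdeg2
          cases rest with
          | nil => simp at hz
          | cons r t => exact List.mem_cons_of_mem _ hz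
        · intro y hy
          apply hlast
          cases rest with
          | nil => simp at hy
          | cons r t => simpa using hy
      exact List.mem_cons_of_mem _ hres

open SimpleGraph in
private lemma walk_hits (G : SimpleGraph V) (x : V) (P : Set V) (hx : x ∉ P)
    (hcl : ∀ a ∈ P, ∀ b, G.Adj a b → b = x ∨ b ∈ P) :
    ∀ {u l : V} (W : G.Walk u l), u ∈ P → l ∉ P → x ∈ W.support := by
  intro u l W
  induction W with
  | nil => intro hu hl; exact absurd hu hl
  | @cons u b l h W ih =>
    intro hu hl
    rcases hcl _ hu _ h with rfl | hb
    · exact List.mem_cons_of_mem _ W.start_mem_support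
    · exact List.mem_cons_of_mem _ (ih hb hl)

open SimpleGraph in
private lemma pendant_dist (G : SimpleGraph V) (hc : G.Connected) (x u l : V) (P : Set V)
    (hu : u ∈ P) (hx : x ∉ P) (hl : l ∉ P) (hadj : G.Adj x u)
    (hcl : ∀ a ∈ P, ∀ b, G.Adj a b → b = x ∨ b ∈ P) :
    G.dist u l = G.dist x l + 1 := by
  classical
  have hr : G.Reachable u l := hc u l
  obtain ⟨W, hW⟩ := hr.exists_walk_length_eq_dist
  have hxs : x ∈ W.support := walk_hits G x P hx hcl W hu hl
  have hlen : (W.takeUntil x hxs).length + (W.dropUntil x hxs).length = W.length := by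
    conv_rhs => rw [← W.take_spec hxs]
    rw [SimpleGraph.Walk.length_append]
  have hune : u ≠ x := fun h => hx (h ▸ hu)
  have h1 : 1 ≤ (W.takeUntil x hxs).length := by
    rcases Nat.eq_zero_or_pos (W.takeUntil x hxs).length with h0 | h0
    · exact absurd ((W.takeUntil x hxs).eq_of_length_eq_zero h0) hune
    · exact h0
  have h2 : G.dist x l ≤ (W.dropUntil x hxs).length := SimpleGraph.dist_le _
  have hge : G.dist x l + 1 ≤ G.dist u l := by omega
  have hux : G.dist u x ≤ 1 := by
    simpa using SimpleGraph.dist_le hadj.symm.toWalk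
  have hle : G.dist u l ≤ G.dist x l + 1 := by
    have := hc.dist_triangle (u := u) (v := x) (w := l)
    omega
  omega

open SimpleGraph in
private lemma leaf_closure [Fintype V] (G : SimpleGraph V) [DecidableRel G.Adj]
    {x u : V} (hadj : G.Adj x u) (hdeg : G.degree u = 1) :
    ∀ b, G.Adj u b → b = x ∨ b = u := by
  intro b hab
  have := leg_closure G x [u] (by simp [hadj.ne]) (by simp [List.Chain, hadj])
    (by simp) (by intro y hy; simp at hy; subst hy; exact hdeg) u (by simp) b hab
  simpa using this

/-- Case ℓ ≤ 1 of Lemma 9: if a special branching point `x` of a tree has `t` leaf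
neighbours and ℓ ≤ 1 legs of length ≥ 2 with t + ℓ ≥ 2, then every detection pair has a
detector in V_x = {x} ∪ (leaf neighbours) ∪ (vertices of the legs of length ≥ 2). -/

theorem stmt11 [Fintype V] (G : SimpleGraph V) [DecidableRel G.Adj] (hT : G.IsTree)
    (x : V) (hx : IsSpecialBranchingPoint G x)
    (Legs : Set (List V)) (Lvs : Set V)
    (hLegs : ∀ p ∈ Legs, IsLeg G x p ∧ 2 ≤ p.length)
    (hLvs : ∀ y ∈ Lvs, G.Adj x y ∧ G.degree y = 1)
    (hl : Legs.ncard ≤ 1) (ht : 2 ≤ Lvs.ncard + Legs.ncard)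
    (W L : Set V) (h : IsDetectionPair G W L) :
    ∃ d ∈ W ∪ L, d = x ∨ d ∈ Lvs ∨ ∃ p ∈ Legs, d ∈ p := by
  by_contra hcon
  push_neg at hcon
  have hdet : ∀ d, d ∈ W ∪ L → d ≠ x ∧ d ∉ Lvs ∧ ∀ p ∈ Legs, d ∉ p := hcon
  have hc : G.Connected := hT.isConnected
  have hleafdist : ∀ u ∈ Lvs, ∀ l : V, l ≠ x → l ≠ u → G.dist u l = G.dist x l + 1 := by
    intro u hu l hlx hlu
    obtain ⟨hadj, hdeg⟩ := hLvs u hu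
    refine pendant_dist G hc x u l {u} rfl (fun h => hadj.ne h) (by simpa using hlu) hadj ?_
    rintro z rfl b hb
    rcases leaf_closure G hadj hdeg b hb with h | h
    · exact Or.inl h
    · exact Or.inr h
  have hdomleaf : ∀ u ∈ Lvs, ¬ Dominated G W u := by
    rintro u hu ⟨w, hwW, hw⟩
    have hd := hdet w (Or.inl hwW)
    obtain ⟨hadj, hdeg⟩ := hLvs u hu
    rcases hw with h | hadjw
    · exact hd.2.1 (by rwa [h])
    · rcases leaf_closure G hadj hdeg w hadjw.symm with h | h
      · exact hd.1 h
      · exact hd.2.1 (by rwa [h])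
  have hcase : Legs.ncard = 0 ∨ Legs.ncard = 1 := by omega
  rcases hcase with h0 | h1
  · -- two distinct leaf neighbours
    have h2 : 1 < Lvs.ncard := by omega
    obtain ⟨u, hu, v, hv, huv⟩ := (Set.one_lt_ncard Lvs.toFinite).mp h2
    rcases h u v huv with hdom | hdom | ⟨l, hlL, hldist⟩
    · exact hdomleaf u hu hdom
    · exact hdomleaf v hv hdom
    · have hd := hdet l (Or.inr hlL)
      have e1 := hleafdist u hu l hd.1 (by rintro rfl; exact hd.2.1 hu)
      have e2 := hleafdist v hv l hd.1 (by rintro rfl; exact hd.2.1 hv)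
      exact hldist (e1.trans e2.symm)
  · -- one leaf neighbour and one leg of length ≥ 2
    obtain ⟨p, hp⟩ : Legs.Nonempty := Set.nonempty_of_ncard_ne_zero (by omega)
    obtain ⟨u, hu⟩ : Lvs.Nonempty := Set.nonempty_of_ncard_ne_zero (by omega)
    obtain ⟨hleg, hlen2⟩ := hLegs p hp
    obtain ⟨hne, hnd, hxp, hch, hlast, hdeg2⟩ := hleg
    obtain ⟨a, rest, rfl⟩ := List.exists_cons_of_ne_nil hne
    have hrest : rest ≠ [] := by
      intro h; subst h; simp at hlen2
    have hadeg : G.degree a = 2 := by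
      apply hdeg2
      cases rest with
      | nil => exact absurd rfl hrest
      | cons r t => simp
    have hadj : G.Adj x a := (List.chain_cons.mp hch).1
    obtain ⟨hadju, hdegu⟩ := hLvs u hu
    have hune : u ≠ a := by
      intro h; rw [h, hadeg] at hdegu; omega
    have hlast' : ∀ y, (a :: rest).getLast? = some y → G.degree y = 1 := by
      obtain ⟨y0, hy0, hy0d⟩ := hlast
      intro y hy
      rw [hy0] at hy
      injection hy with hy
      rwa [← hy]
    have hclP : ∀ z ∈ {v : V | v ∈ a :: rest}, ∀ b, G.Adj z b →
        b = x ∨ b ∈ {v : V | v ∈ a :: rest} := by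
      intro z hz b hb
      have := leg_closure G x (a :: rest) (List.nodup_cons.mpr ⟨hxp, hnd⟩) hch hdeg2 hlast' z hz b hb
      rcases List.mem_cons.mp this with h | h
      · exact Or.inl h
      · exact Or.inr h
    rcases h u a hune with hdom | hdom | ⟨l, hlL, hldist⟩
    · exact hdomleaf u hu hdom
    · obtain ⟨w, hwW, hw⟩ := hdom
      have hd := hdet w (Or.inl hwW)
      rcases hw with hwa | hadjw
      · exact hd.2.2 _ hp (by rw [hwa]; exact List.mem_cons_self)
      · rcases hclP a (by simp) w hadjw.symm with h | h
        · exact hd.1 h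
        · exact hd.2.2 _ hp h
    · have hd := hdet l (Or.inr hlL)
      have hlnp : l ∉ {v : V | v ∈ a :: rest} := hd.2.2 _ hp
      have e1 : G.dist u l = G.dist x l + 1 :=
        hleafdist u hu l hd.1 (by rintro rfl; exact hd.2.1 hu)
      have e2 : G.dist a l = G.dist x l + 1 :=
        pendant_dist G hc x a l {v : V | v ∈ a :: rest} (by simp) hxp hlnp hadj hclP
      exact hldist (e1.trans e2.symm)

end DetPair
end

section
/- Let T be a tree, x ∈ V(T), and T_x a subtree of T containing x such that every vertex of T_x except x has the same degree in T_x as in T. Suppose (W,L) is a detection pair of T such that no vertex of T_x − x is a listener, and let P_i denote the set of vertices of T_x at distance i from x. Then for every i and every two distinct vertices u,v ∈ P_i, at least one of u,v is dominated by a watcher of W. -/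
open SimpleGraph

namespace DetPair

variable {V : Type*}

lemma walk_through (G : SimpleGraph V) (x : V) (Tx : Set V)
    (hfull : ∀ v ∈ Tx, v ≠ x → ∀ w, G.Adj v w → w ∈ Tx)
    {u l : V} (hu : u ∈ Tx) (hl : l ∉ Tx) (p : G.Walk u l) : x ∈ p.support := by
  induction p with
  | nil => exact absurd hu hl
  | cons hadj q ih =>
    rename_i a b c
    rw [SimpleGraph.Walk.support_cons]
    by_cases hax : a = x
    · simp [hax]
    · exact List.mem_cons_of_mem _ (ih (hfull a hu hax b hadj) hl)

lemma dist_add (G : SimpleGraph V) (hc : G.Connected) (x : V) (Tx : Set V)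
    (hfull : ∀ v ∈ Tx, v ≠ x → ∀ w, G.Adj v w → w ∈ Tx)
    {u l : V} (hu : u ∈ Tx) (hl : l ∉ Tx) :
    G.dist u l = G.dist u x + G.dist x l := by
  classical
  refine le_antisymm (hc.dist_triangle) ?_
  obtain ⟨p, hp⟩ := hc.exists_walk_length_eq_dist u l
  have hx := walk_through G x Tx hfull hu hl p
  calc G.dist u x + G.dist x l ≤ (p.takeUntil x hx).length + (p.dropUntil x hx).length :=
        Nat.add_le_add (dist_le _) (dist_le _)
    _ = p.length := by rw [← SimpleGraph.Walk.length_append, SimpleGraph.Walk.take_spec]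
    _ = G.dist u l := hp

/-- If the subtree `T_x` hangs from `x` (all its vertices except `x` keep their full
degree) and a detection pair has no listener in `T_x − x`, then among any two distinct
vertices of `T_x` at the same distance from `x`, one must be dominated by a watcher. -/
theorem stmt13 (G : SimpleGraph V) (hT : G.IsTree)
    (x : V) (Tx : Set V) (hxT : x ∈ Tx)
    (hconn : (G.induce Tx).Connected)
    (hfull : ∀ v ∈ Tx, v ≠ x → ∀ w, G.Adj v w → w ∈ Tx)
    (W L : Set V) (h : IsDetectionPair G W L)
    (hnoL : ∀ l ∈ L, l ∈ Tx → l = x) :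
    ∀ i : ℕ, ∀ u ∈ Tx, ∀ v ∈ Tx, u ≠ v →
      G.dist x u = i → G.dist x v = i →
      Dominated G W u ∨ Dominated G W v := by

  intro i u hu v hv huv hdu hdv
  rcases h u v huv with hd | hd | ⟨l, hlL, hne⟩
  · exact Or.inl hd
  · exact Or.inr hd
  exfalso
  apply hne
  have hc : G.Connected := hT.1
  by_cases hlT : l ∈ Tx
  · have : l = x := hnoL l hlL hlT
    subst this
    rw [G.dist_comm, hdu, G.dist_comm, hdv]
  · rw [dist_add G hc x Tx hfull hu hlT, dist_add G hc x Tx hfull hv hlT,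
      G.dist_comm (u := u), hdu, G.dist_comm (u := v), hdv]

end DetPair
end

section
/- Let T be a tree with n ≥ 2 vertices. Then T has a detection pair of size at most 2·DP(T) of the form (S, R), where S is the set of t-stems of T with t ≥ 3 and R is an optimal resolving set of the tree T′ obtained from T by deleting, at each such stem with t leaf neighbours and ℓ legs of length ≥ 2 attached: t−2 leaf neighbours if ℓ = 0, t−1 leaf neighbours if ℓ = 1, and all t leaf neighbours if ℓ ≥ 2. -/
open SimpleGraph

namespace DetPair

variable {V : Type*}

section TreeInfra
variable {G : SimpleGraph V} {w a b : V}


theorem tree_path_len (hT : G.IsTree) {x y : V} (p : G.Walk x y) (hp : p.IsPath) :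
    p.length = G.dist x y := by
  obtain ⟨q, hq, hql⟩ := hT.isConnected.exists_path_of_dist x y
  have h2 := hT.IsAcyclic.path_unique ⟨p, hp⟩ ⟨q, hq⟩
  rw [← hql]
  exact congrArg Walk.length (congrArg Subtype.val h2)

theorem split_dist (hT : G.IsTree) {x y w : V} (p : G.Walk x y) (hp : p.IsPath)
    (hw : w ∈ p.support) : G.dist x y = G.dist x w + G.dist w y := by
  classical
  have h1 := hp.takeUntil hw
  have h2 := hp.dropUntil hw
  have := tree_path_len hT p hp
  have l1 := tree_path_len hT _ h1
  have l2 := tree_path_len hT _ h2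
  have hsp := congrArg Walk.length (p.take_spec hw)
  rw [Walk.length_append] at hsp
  omega

theorem isPath_concat {x y z : V} {p : G.Walk x y} (hp : p.IsPath) (h : G.Adj y z)
    (hz : z ∉ p.support) : (p.concat h).IsPath := by
  rw [← Walk.isPath_reverse_iff, Walk.reverse_concat]
  exact (Walk.cons_isPath_iff _ _).2 ⟨hp.reverse, by simpa using hz⟩

theorem tree_dichotomy (hT : G.IsTree) (hwa : G.Adj w a) (z : V) :
    G.dist z w = G.dist z a + 1 ∨ G.dist z a = G.dist z w + 1 := by
  obtain ⟨p, hp, hl⟩ := hT.isConnected.exists_path_of_dist z w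
  by_cases ha : a ∈ p.support
  · left
    have := split_dist hT p hp ha
    rw [this, dist_eq_one_iff_adj.2 hwa.symm]
  · right
    have hq : (p.concat hwa).IsPath := isPath_concat hp hwa ha
    have := tree_path_len hT _ hq
    rw [Walk.length_concat, hl] at this
    omega

/-- The branch at the neighbour `a` of `w`. -/
def Br (G : SimpleGraph V) (w a : V) : Set V := {z | G.dist z w = G.dist z a + 1}

theorem mem_Br_iff {z : V} : z ∈ Br G w a ↔ G.dist z w = G.dist z a + 1 := Iff.rfl

theorem a_mem_Br (hwa : G.Adj w a) : a ∈ Br G w a := by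
  simp [Br, dist_eq_one_iff_adj.2 hwa.symm]

theorem w_not_mem_Br (w a : V) : w ∉ Br G w a := by
  simp only [Br, Set.mem_setOf_eq, dist_self]
  omega

theorem not_mem_Br_iff (hT : G.IsTree) (hwa : G.Adj w a) {z : V} :
    z ∉ Br G w a ↔ G.dist z a = G.dist z w + 1 := by
  have hd := tree_dichotomy hT hwa z
  simp only [Br, Set.mem_setOf_eq]
  constructor
  · intro hz
    rcases hd with h | h
    · exact absurd h hz
    · exact h
  · intro h hz
    omega

theorem Br_nbr_of_w (hT : G.IsTree) (hwa : G.Adj w a) {z : V} (hz : z ∈ Br G w a)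
    (h : G.Adj w z) : z = a := by
  have h1 : G.dist z w = 1 := dist_eq_one_iff_adj.2 h.symm
  have h0 : G.dist z a = 0 := by have := hz; simp only [Br, Set.mem_setOf_eq] at this; omega
  exact hT.isConnected.dist_eq_zero_iff.1 h0

theorem crossing (hT : G.IsTree) (hwa : G.Adj w a) {u v : V} (hu : u ∉ Br G w a)
    (hv : v ∈ Br G w a) (huv : G.Adj u v) : u = w := by
  by_contra hne
  have hconn := hT.isConnected
  have hvBr : G.dist v w = G.dist v a + 1 := hv
  have huBr : G.dist u a = G.dist u w + 1 := (not_mem_Br_iff hT hwa).1 hu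
  have hduv : G.dist u v = 1 := dist_eq_one_iff_adj.2 huv
  obtain ⟨q, hq, hql⟩ := hconn.exists_path_of_dist v a
  have hwq : w ∉ q.support := by
    intro hmem
    have := split_dist hT q hq hmem
    have hwa1 : G.dist w a = 1 := dist_eq_one_iff_adj.2 hwa
    omega
  have huq : u ∉ q.support := by
    intro hmem
    have h1 := split_dist hT q hq hmem
    have h2 : G.dist v u = 1 := dist_eq_one_iff_adj.2 huv.symm
    have h3 : G.dist v w ≤ G.dist v u + G.dist u w := hconn.dist_triangle
    omega
  have hR : (Walk.cons huv (q.concat hwa.symm)).IsPath := by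
    refine (Walk.cons_isPath_iff _ _).2 ⟨isPath_concat hq hwa.symm hwq, ?_⟩
    rw [Walk.support_concat]
    simp only [List.concat_eq_append, List.mem_append, List.mem_singleton]
    rintro (h | h)
    · exact huq h
    · exact hne h
  have hlen := tree_path_len hT _ hR
  simp only [Walk.length_cons, Walk.length_concat, hql] at hlen
  have h4 : G.dist u a ≤ G.dist u v + G.dist v a := hconn.dist_triangle
  omega

theorem exists_crossing {s : Set V} : ∀ {x y : V} (p : G.Walk x y), x ∉ s → y ∈ s →
    ∃ u v, G.Adj u v ∧ u ∈ p.support ∧ u ∉ s ∧ v ∈ s := by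
  intro x y p
  induction p with
  | nil => intro hx hy; exact absurd hy hx
  | @cons x c y h q ih =>
    intro hx hy
    by_cases hc : c ∈ s
    · exact ⟨_, _, h, by simp, hx, hc⟩
    · obtain ⟨u, v, h1, h2, h3, h4⟩ := ih hc hy
      exact ⟨u, v, h1, by simp [h2], h3, h4⟩

theorem dist_through_w (hT : G.IsTree) (hwa : G.Adj w a) {y z : V} (hy : y ∉ Br G w a)
    (hz : z ∈ Br G w a) : G.dist y z = G.dist y w + G.dist w z := by
  obtain ⟨p, hp, hl⟩ := hT.isConnected.exists_path_of_dist y z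
  obtain ⟨u, v, h1, h2, h3, h4⟩ := exists_crossing p hy hz
  have : u = w := crossing hT hwa h3 h4 h1
  subst this
  exact split_dist hT p hp h2

theorem mem_Br_of_adj (hT : G.IsTree) (hwa : G.Adj w a) {z z' : V} (hz : z ∈ Br G w a)
    (hzz' : G.Adj z' z) (hne : z' ≠ w) : z' ∈ Br G w a := by
  by_contra h
  exact hne (crossing hT hwa h hz hzz')

theorem Br_disjoint (hT : G.IsTree) (hwa : G.Adj w a) (hwb : G.Adj w b) (hab : a ≠ b)
    {z : V} (hza : z ∈ Br G w a) : z ∉ Br G w b := by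
  intro hzb
  have hba : b ∉ Br G w a := fun h => hab (Br_nbr_of_w hT hwa h hwb).symm
  have h1 : G.dist b z = G.dist b w + G.dist w z := dist_through_w hT hwa hba hza
  have h2 : G.dist z w = G.dist z b + 1 := hzb
  have h3 : G.dist b w = 1 := dist_eq_one_iff_adj.2 hwb.symm
  have h4 : G.dist b z = G.dist z b := SimpleGraph.dist_comm
  have h5 : G.dist z w = G.dist w z := SimpleGraph.dist_comm
  omega

theorem zero_lt_dist_w_of_mem_Br (hT : G.IsTree) {z : V} (hz : z ∈ Br G w a) :
    1 ≤ G.dist w z := by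
  rcases Nat.eq_zero_or_pos (G.dist w z) with h | h
  · exact absurd (hT.isConnected.dist_eq_zero_iff.1 h) (by rintro rfl; exact w_not_mem_Br w a hz)
  · exact h

/-- penultimate vertex towards `z` -/
theorem exists_penultimate (hT : G.IsTree) {x z : V} (h : 1 ≤ G.dist x z) :
    ∃ c, G.Adj c z ∧ G.dist x c + 1 = G.dist x z := by
  obtain ⟨p, hp, hl⟩ := hT.isConnected.exists_path_of_dist x z
  have hrp : p.reverse.IsPath := hp.reverse
  cases hpr : p.reverse with
  | nil =>
    exfalso
    have := congrArg Walk.length hpr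
    simp only [Walk.length_reverse, Walk.length_nil] at this
    omega
  | cons hadj q =>
    rename_i c
    have hq : q.IsPath := by
      rw [hpr] at hrp
      exact ((Walk.cons_isPath_iff _ _).1 hrp).1
    have hql := tree_path_len hT q hq
    have : p.reverse.length = 1 + q.length := by rw [hpr]; simp [Walk.length_cons]; omega
    rw [Walk.length_reverse, hl] at this
    refine ⟨c, hadj.symm, ?_⟩
    have h6 : G.dist x c = G.dist c x := SimpleGraph.dist_comm
    omega

theorem exists_depth (hT : G.IsTree) (hwa : G.Adj w a) :
    ∀ (d : ℕ) (z : V), z ∈ Br G w a → G.dist w z = d → ∀ k, 1 ≤ k → k ≤ d →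
      ∃ p ∈ Br G w a, G.dist w p = k := by
  intro d
  induction d with
  | zero => intro z hz _ k h1 h2; omega
  | succ n ih =>
    intro z hz hd k h1 h2
    rcases eq_or_lt_of_le h2 with h | h
    · exact ⟨z, hz, by omega⟩
    · obtain ⟨c, hc, hcd⟩ := exists_penultimate hT (x := w) (z := z) (by omega)
      have hcw : c ≠ w := by
        intro hcw
        rw [hcw, dist_self] at hcd
        omega
      have hcBr : c ∈ Br G w a := mem_Br_of_adj hT hwa hz hc hcw
      exact ih c hcBr (by omega) k h1 (by omega)


section deg
variable [Fintype V] [DecidableRel G.Adj]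

theorem deg_one_exists (h : G.degree w = 1) : ∃ x, G.Adj w x := by
  have : 0 < G.degree w := by omega
  rw [G.degree_pos_iff_exists_adj] at this
  exact this

theorem deg_one_unique (h : G.degree w = 1) {x y : V} (hx : G.Adj w x) (hy : G.Adj w y) :
    x = y := by
  have hx' : x ∈ G.neighborFinset w := by simpa using hx
  have hy' : y ∈ G.neighborFinset w := by simpa using hy
  have := Finset.card_le_one.1 (le_of_eq h)
  exact this x hx' y hy'

theorem deg_two_of_nbrs {x y : V} (hx : G.Adj w x) (hy : G.Adj w y) (hxy : x ≠ y) :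
    2 ≤ G.degree w := by
  classical
  have hsub : ({x, y} : Finset V) ⊆ G.neighborFinset w := by
    intro z hz
    simp only [Finset.mem_insert, Finset.mem_singleton] at hz
    rcases hz with rfl | rfl <;> simpa
  calc 2 = ({x, y} : Finset V).card := (Finset.card_pair hxy).symm
    _ ≤ _ := Finset.card_le_card hsub

theorem deg_three_of_nbrs {x y z : V} (hx : G.Adj w x) (hy : G.Adj w y) (hz : G.Adj w z)
    (hxy : x ≠ y) (hxz : x ≠ z) (hyz : y ≠ z) : 3 ≤ G.degree w := by
  classical
  have hsub : ({x, y, z} : Finset V) ⊆ G.neighborFinset w := by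
    intro u hu
    simp only [Finset.mem_insert, Finset.mem_singleton] at hu
    rcases hu with rfl | rfl | rfl <;> simpa
  have hcard : ({x, y, z} : Finset V).card = 3 := by
    rw [Finset.card_insert_of_notMem (by simp [hxy, hxz]),
      Finset.card_insert_of_notMem (by simp [hyz]), Finset.card_singleton]
  calc 3 = ({x, y, z} : Finset V).card := hcard.symm
    _ ≤ _ := Finset.card_le_card hsub

theorem leaf_dist (hT : G.IsTree) {u x : V} (hdeg : G.degree u = 1) (hx : G.Adj u x)
    {z : V} (hz : z ≠ u) : G.dist z u = G.dist z x + 1 := by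
  have h1 : 1 ≤ G.dist z u := hT.isConnected.pos_dist_of_ne hz
  obtain ⟨c, hc, hcd⟩ := exists_penultimate hT h1
  have hcx : c = x := deg_one_unique hdeg hc.symm hx
  subst hcx
  omega

/-- an internal vertex of a path has degree at least 2 -/
theorem internal_deg_two : ∀ {x y : V} (p : G.Walk x y), p.IsPath → ∀ v ∈ p.support,
    v ≠ x → v ≠ y → 2 ≤ G.degree v := by
  intro x y p
  induction p with
  | nil => intro _ v hv hvx _; simp at hv; exact absurd hv hvx
  | @cons x' c y' h q ih =>
    intro hp v hv hvx hvy
    have hq : q.IsPath := ((Walk.cons_isPath_iff _ _).1 hp).1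
    have hxq : x' ∉ q.support := ((Walk.cons_isPath_iff _ _).1 hp).2
    rw [Walk.support_cons] at hv
    simp only [List.mem_cons] at hv
    rcases hv with rfl | hv
    · exact absurd rfl hvx
    · by_cases hvc : v = c
      · subst hvc
        cases q with
        | nil => exact absurd rfl hvy
        | @cons _ d _ hadj q' =>
          have hdq : d ∈ (Walk.cons hadj q').support := by simp
          have hxd : x' ≠ d := fun hh => hxq (hh ▸ hdq)
          exact deg_two_of_nbrs h.symm hadj hxd
      · exact ih hq v hv hvc hvy
end deg

/-- Lifting a walk with support in `K` to the induced subgraph. -/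
theorem lift_walk {K : Set V} : ∀ {x y : V} (p : G.Walk x y) (hx : x ∈ K) (hy : y ∈ K),
    (∀ v ∈ p.support, v ∈ K) →
    ∃ q : (G.induce K).Walk ⟨x, hx⟩ ⟨y, hy⟩, q.length = p.length := by
  intro x y p
  induction p with
  | nil => intro hx hy _; exact ⟨Walk.nil, rfl⟩
  | @cons x c y h q ih =>
    intro hx hy hs
    have hc : c ∈ K := hs c (by simp)
    obtain ⟨q', hq'⟩ := ih hc hy (fun v hv => hs v (by simp [hv]))
    refine ⟨Walk.cons (by exact h) q', by exact congrArg (· + 1) hq'⟩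

theorem induced_dist_le {K : Set V} {x y : V} (hx : x ∈ K) (hy : y ∈ K)
    (q : (G.induce K).Walk ⟨x, hx⟩ ⟨y, hy⟩) : G.dist x y ≤ q.length := by
  classical
  let f : G.induce K →g G := ⟨Subtype.val, fun {a b} hab => hab⟩
  have := SimpleGraph.dist_le (q.map f)
  rw [Walk.length_map] at this
  exact this

theorem induce_dist_eq [Fintype V] [DecidableRel G.Adj] (hT : G.IsTree) (K : Set V)
    (hcompl : ∀ v, v ∉ K → G.degree v ≤ 1) {x y : V} (hx : x ∈ K) (hy : y ∈ K) :
    (G.induce K).dist ⟨x, hx⟩ ⟨y, hy⟩ = G.dist x y := by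
  classical
  by_cases hxy : x = y
  · subst hxy
    simp [SimpleGraph.dist_self]
  · obtain ⟨p, hp, hl⟩ := hT.isConnected.exists_path_of_dist x y
    have hsup : ∀ v ∈ p.support, v ∈ K := by
      intro v hv
      by_contra hvK
      by_cases hvx : v = x
      · exact hvK (hvx ▸ hx)
      by_cases hvy : v = y
      · exact hvK (hvy ▸ hy)
      have := internal_deg_two p hp v hv hvx hvy
      have := hcompl v hvK
      omega
    obtain ⟨q, hql⟩ := lift_walk p hx hy hsup
    have hreach : (G.induce K).Reachable ⟨x, hx⟩ ⟨y, hy⟩ := ⟨q⟩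
    have h1 : (G.induce K).dist ⟨x, hx⟩ ⟨y, hy⟩ ≤ G.dist x y := by
      calc (G.induce K).dist ⟨x, hx⟩ ⟨y, hy⟩ ≤ q.length := SimpleGraph.dist_le q
        _ = p.length := hql
        _ = G.dist x y := hl
    have h2 : G.dist x y ≤ (G.induce K).dist ⟨x, hx⟩ ⟨y, hy⟩ := by
      obtain ⟨q', hq'⟩ := hreach.exists_walk_length_eq_dist
      calc G.dist x y ≤ q'.length := induced_dist_le hx hy q'
        _ = _ := hq'
    omega

end TreeInfra

section Main
variable {G : SimpleGraph V} {w a b : V}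



theorem chain_iff_get_aux {α : Type*} {R : α → α → Prop} {a : α} {l : List α} :
    List.Chain R a l ↔ (∀ h : 0 < l.length, R a (l.get ⟨0, h⟩)) ∧
      ∀ (i : ℕ) (h : i < l.length - 1), R (l.get ⟨i, by omega⟩) (l.get ⟨i + 1, by omega⟩) := by
  unfold List.Chain
  rw [List.isChain_iff_getElem]
  constructor
  · intro h
    exact ⟨fun h0 => h 0 (by simp; omega),
      fun i hi => h (i + 1) (by simp; omega)⟩
  · rintro ⟨h0, h1⟩ i hi
    cases i with
    | zero => exact h0 (by simp at hi; omega)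
    | succ i => exact h1 i (by simp at hi; omega)

section main
variable [Fintype V] [DecidableRel G.Adj]

theorem shallow_Br (hT : G.IsTree) (hwa : G.Adj w a)
    (hsh : ¬ ∃ z ∈ Br G w a, 2 ≤ G.dist w z) :
    Br G w a = {a} ∧ G.degree a = 1 := by
  push_neg at hsh
  have hBr : Br G w a = {a} := by
    apply Set.eq_singleton_iff_unique_mem.2
    refine ⟨a_mem_Br hwa, ?_⟩
    intro z hz
    have h1 := zero_lt_dist_w_of_mem_Br hT hz
    have h2 := hsh z hz
    have h3 : G.dist w z = 1 := by omega
    exact Br_nbr_of_w hT hwa hz (dist_eq_one_iff_adj.1 h3)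
  refine ⟨hBr, ?_⟩
  have : G.neighborFinset a = {w} := by
    apply Finset.eq_singleton_iff_unique_mem.2
    constructor
    · simpa using hwa.symm
    · intro z hz
      rw [mem_neighborFinset] at hz
      by_contra hzw
      have : z ∈ Br G w a := mem_Br_of_adj hT hwa (a_mem_Br hwa) hz.symm hzw
      rw [hBr] at this
      exact G.irrefl (this ▸ hz)
  rw [degree, this, Finset.card_singleton]

theorem branch_is_leg (hT : G.IsTree) (hwb : G.Adj w b)
    (hsing : ∀ z₁ z₂, z₁ ∈ Br G w b → z₂ ∈ Br G w b → G.dist w z₁ = G.dist w z₂ → z₁ = z₂)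
    (hdeep : ∃ z ∈ Br G w b, 2 ≤ G.dist w z) :
    ∃ p : List V, IsLeg G w p ∧ 2 ≤ p.length := by
  classical
  -- the maximal depth m
  obtain ⟨z₀, hz₀, hz₀d⟩ := hdeep
  have hfin : (Br G w b).Finite := Set.toFinite _
  obtain ⟨m, z₁, hz₁, hz₁d, hmax⟩ : ∃ m z₁, z₁ ∈ Br G w b ∧ G.dist w z₁ = m ∧
      ∀ z ∈ Br G w b, G.dist w z ≤ m := by
    obtain ⟨z₁, hz₁m, hz₁max⟩ := hfin.toFinset.exists_max_image (G.dist w)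
      ⟨z₀, hfin.mem_toFinset.2 hz₀⟩
    exact ⟨G.dist w z₁, z₁, hfin.mem_toFinset.1 hz₁m, rfl,
      fun z hz => hz₁max z (hfin.mem_toFinset.2 hz)⟩
  have hm2 : 2 ≤ m := le_trans hz₀d (hz₁d ▸ hmax z₀ hz₀)
  -- the vertex at each depth
  have hex : ∀ k, 1 ≤ k → k ≤ m → ∃ z ∈ Br G w b, G.dist w z = k :=
    fun k h1 h2 => exists_depth hT hwb m z₁ hz₁ hz₁d k h1 h2
  set g : ℕ → V := fun k => if h : ∃ z ∈ Br G w b, G.dist w z = k then h.choose else w with hg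
  have hgspec : ∀ k, 1 ≤ k → k ≤ m → g k ∈ Br G w b ∧ G.dist w (g k) = k := by
    intro k h1 h2
    have h := hex k h1 h2
    simp only [hg, dif_pos h]
    exact ⟨h.choose_spec.1, h.choose_spec.2⟩
  have huniq : ∀ k, ∀ z ∈ Br G w b, G.dist w z = k → z = g k := by
    intro k z hz hd
    have h1 : 1 ≤ k := hd ▸ zero_lt_dist_w_of_mem_Br hT hz
    have h2 : k ≤ m := hd ▸ hmax z hz
    exact hsing z (g k) hz (hgspec k h1 h2).1 (hd.trans (hgspec k h1 h2).2.symm)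
  -- adjacency along the leg
  have hadj : ∀ k, 1 ≤ k → k + 1 ≤ m → G.Adj (g k) (g (k + 1)) := by
    intro k h1 h2
    obtain ⟨hmem, hd⟩ := hgspec (k + 1) (by omega) h2
    obtain ⟨c, hc, hcd⟩ := exists_penultimate hT (x := w) (z := g (k+1)) (by omega)
    have hcw : c ≠ w := by
      intro h
      rw [h, dist_self] at hcd
      omega
    have hcBr : c ∈ Br G w b := mem_Br_of_adj hT hwb hmem hc hcw
    have : c = g k := huniq k c hcBr (by omega)
    exact this ▸ hc
  have hwadj : G.Adj w (g 1) := by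
    have h := (hgspec 1 le_rfl (by omega)).2
    exact dist_eq_one_iff_adj.1 h
  -- neighbours of g k for 1 ≤ k ≤ m are exactly g (k-1) / g (k+1)
  have hnbr : ∀ k, 1 ≤ k → k ≤ m → ∀ z, G.Adj z (g k) →
      (z = w ∧ k = 1) ∨ (z ∈ Br G w b ∧ (G.dist w z = k - 1 ∨ G.dist w z = k + 1)) := by
    intro k h1 h2 z hz
    obtain ⟨hmem, hd⟩ := hgspec k h1 h2
    by_cases hzw : z = w
    · subst hzw
      left
      exact ⟨rfl, by rw [← hd]; exact (dist_eq_one_iff_adj.2 hz).symm ▸ rfl⟩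
    · right
      have hzBr : z ∈ Br G w b := mem_Br_of_adj hT hwb hmem hz hzw
      refine ⟨hzBr, ?_⟩
      have ht1 : G.dist w z ≤ G.dist w (g k) + 1 := by
        have := hT.isConnected.dist_triangle (u := w) (v := g k) (w := z)
        have h5 : G.dist (g k) z = 1 := dist_eq_one_iff_adj.2 hz.symm
        omega
      have ht2 : G.dist w (g k) ≤ G.dist w z + 1 := by
        have := hT.isConnected.dist_triangle (u := w) (v := z) (w := g k)
        have h5 : G.dist z (g k) = 1 := dist_eq_one_iff_adj.2 hz
        omega
      have hne : G.dist w z ≠ k := by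
        intro h
        exact (G.irrefl (huniq k z hzBr h ▸ hz))
      omega
  have hg0 : g 0 = w := by
    have : ¬ ∃ z ∈ Br G w b, G.dist w z = 0 := by
      rintro ⟨z, hz, hz0⟩
      have := zero_lt_dist_w_of_mem_Br hT hz
      omega
    simp only [hg, dif_neg this]
  -- degree of the last vertex
  have hdeg_last : G.degree (g m) = 1 := by
    have : G.neighborFinset (g m) = {g (m - 1)} := by
      apply Finset.eq_singleton_iff_unique_mem.2
      constructor
      · rw [mem_neighborFinset]
        have h := hadj (m-1) (by omega) (by omega)
        have e : m - 1 + 1 = m := by omega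
        rw [e] at h
        exact h.symm
      · intro z hz
        rw [mem_neighborFinset] at hz
        rcases hnbr m (by omega) le_rfl z hz.symm with ⟨_, h⟩ | ⟨hzBr, hd | hd⟩
        · omega
        · exact huniq (m - 1) z hzBr hd
        · exact absurd (hd ▸ hmax z hzBr) (by omega)
    rw [degree, this, Finset.card_singleton]
  -- degree of internal vertices
  have hdeg_mid : ∀ k, 1 ≤ k → k ≤ m - 1 → G.degree (g k) = 2 := by
    intro k h1 h2
    have hprev : G.Adj (g (k - 1)) (g k) := by
      rcases Nat.eq_or_lt_of_le h1 with h | h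
      · have : k - 1 = 0 := by omega
        rw [this, hg0]
        exact (show (1:ℕ) = k by omega) ▸ hwadj
      · have hh := hadj (k-1) (by omega) (by omega)
        have e : k - 1 + 1 = k := by omega
        rw [e] at hh
        exact hh
    have hnext : G.Adj (g k) (g (k + 1)) := hadj k h1 (by omega)
    have hprevd : G.dist w (g (k - 1)) = k - 1 := by
      rcases Nat.eq_or_lt_of_le h1 with h | h
      · have : k - 1 = 0 := by omega
        rw [this, hg0, SimpleGraph.dist_self]
      · exact (hgspec (k-1) (by omega) (by omega)).2
    have hnextd : G.dist w (g (k + 1)) = k + 1 := (hgspec (k+1) (by omega) (by omega)).2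
    have : G.neighborFinset (g k) = {g (k - 1), g (k + 1)} := by
      apply Finset.ext
      intro z
      rw [mem_neighborFinset, Finset.mem_insert, Finset.mem_singleton]
      constructor
      · intro hz
        rcases hnbr k h1 (by omega) z hz.symm with ⟨hzw, hk1⟩ | ⟨hzBr, hd | hd⟩
        · left; rw [hzw, hk1, hg0]
        · rcases Nat.eq_or_lt_of_le h1 with h | h
          · exfalso
            have := zero_lt_dist_w_of_mem_Br hT hzBr
            omega
          · left; exact huniq (k-1) z hzBr hd
        · right; exact huniq (k+1) z hzBr hd
      · rintro (rfl | rfl)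
        · exact hprev.symm
        · exact hnext
    rw [degree, this, Finset.card_insert_of_notMem (by
        simp only [Finset.mem_singleton]
        intro h
        rw [h, hnextd] at hprevd
        omega), Finset.card_singleton]
  -- assemble the list
  refine ⟨(List.range m).map (fun i => g (i + 1)), ?_, by simp; omega⟩
  have hlen : ((List.range m).map (fun i => g (i + 1))).length = m := by simp
  have hget : ∀ (i : ℕ) (h : i < m),
      ((List.range m).map (fun i => g (i + 1)))[i]'(by simpa using h) = g (i + 1) := by
    intro i h
    simp
  refine ⟨by simp; omega, ?_, ?_, ?_, ?_, ?_⟩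
  · -- Nodup
    refine List.Nodup.map_on ?_ List.nodup_range
    intro i hi j hj hij
    rw [List.mem_range] at hi hj
    have h1 := (hgspec (i+1) (by omega) (by omega)).2
    have h2 := (hgspec (j+1) (by omega) (by omega)).2
    rw [hij] at h1
    omega
  · -- w not a member
    intro hmem
    rw [List.mem_map] at hmem
    obtain ⟨i, hi, hiw⟩ := hmem
    rw [List.mem_range] at hi
    have := (hgspec (i+1) (by omega) (by omega)).2
    rw [hiw, SimpleGraph.dist_self] at this
    omega
  · -- chain
    rw [chain_iff_get_aux]
    constructor
    · intro h
      rw [List.get_eq_getElem, hget 0 (by simpa using h)]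
      exact hwadj
    · intro i h
      rw [hlen] at h
      rw [List.get_eq_getElem, List.get_eq_getElem, hget i (by omega), hget (i+1) (by omega)]
      exact hadj (i+1) (by omega) (by omega)
  · -- last vertex is a leaf
    refine ⟨g m, ?_, hdeg_last⟩
    have hne : ((List.range m).map (fun i => g (i + 1))) ≠ [] := by simp; omega
    rw [List.getLast?_eq_getLast_of_ne_nil hne]
    congr 1
    rw [List.getLast_eq_getElem, hget (((List.range m).map (fun i => g (i + 1))).length - 1)
      (by rw [hlen]; omega)]
    congr 1
    rw [hlen]
    omega
  · -- internal vertices have degree 2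
    intro v hv
    have hsplit : List.range m = List.range (m - 1) ++ [m - 1] := by
      have : m = (m - 1) + 1 := by omega
      rw [this, List.range_succ]
      congr 1 <;> omega
    rw [hsplit, List.map_append] at hv
    simp only [List.map_cons, List.map_nil] at hv
    rw [List.dropLast_concat] at hv
    rw [List.mem_map] at hv
    obtain ⟨i, hi, hiv⟩ := hv
    rw [List.mem_range] at hi
    rw [← hiv]
    exact hdeg_mid (i + 1) (by omega) (by omega)
end main

theorem key [Fintype V] (G : SimpleGraph V) [DecidableRel G.Adj]
    (hT : G.IsTree)
    (S : Set V)
    (hS : S = {x | 3 ≤ G.degree x ∧ 3 ≤ {y | G.Adj x y ∧ G.degree y = 1}.ncard})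
    (D : Set V)
    (hDsub : D ⊆ {y | ∃ x ∈ S, G.Adj x y ∧ G.degree y = 1})
    (hDcount : ∀ x ∈ S,
      (D ∩ {y | G.Adj x y ∧ G.degree y = 1}).ncard =
        (if 2 ≤ {p | IsLeg G x p ∧ 2 ≤ p.length}.ncard then
            {y | G.Adj x y ∧ G.degree y = 1}.ncard
          else if {p | IsLeg G x p ∧ 2 ≤ p.length}.ncard = 1 then
            {y | G.Adj x y ∧ G.degree y = 1}.ncard - 1
          else {y | G.Adj x y ∧ G.degree y = 1}.ncard - 2))
    (W L : Set V) (hWL : IsDetectionPair G W L) :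
    ∃ R₀ : Set V, R₀ ⊆ Dᶜ ∧
      (∀ a b : V, a ∈ Dᶜ → b ∈ Dᶜ → a ≠ b → ∃ r ∈ R₀, G.dist a r ≠ G.dist b r) ∧
      S.ncard + R₀.ncard ≤ 2 * (W.ncard + L.ncard) := by
  classical
  have hconn := hT.isConnected
  set Lf : V → Set V := fun x => {y | G.Adj x y ∧ G.degree y = 1} with hLf
  have hSdeg : ∀ x ∈ S, 3 ≤ G.degree x := fun x hx => by rw [hS] at hx; exact hx.1
  have hSLf : ∀ x ∈ S, 3 ≤ (Lf x).ncard := fun x hx => by rw [hS] at hx; exact hx.2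
  have hDleaf : ∀ y ∈ D, G.degree y = 1 := fun y hy => (hDsub hy).choose_spec.2.2
  have hDstem : ∀ y ∈ D, ∃ x ∈ S, G.Adj x y := fun y hy =>
    ⟨(hDsub hy).choose, (hDsub hy).choose_spec.1, (hDsub hy).choose_spec.2.1⟩
  have hSD : S ⊆ Dᶜ := by
    intro x hx hxD
    have := hSdeg x hx
    have := hDleaf x hxD
    omega
  -- the stem of a leaf
  set stm : V → V := fun v => if h : ∃ x, G.Adj v x then h.choose else v with hstm
  have hstm_eq : ∀ v x, G.degree v = 1 → G.Adj v x → stm v = x := by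
    intro v x hdeg hx
    have h : ∃ z, G.Adj v z := ⟨x, hx⟩
    simp only [hstm, dif_pos h]
    exact deg_one_unique hdeg h.choose_spec hx
  have hstmD : ∀ l ∈ D, G.Adj l (stm l) ∧ stm l ∈ S := by
    intro l hl
    obtain ⟨x, hxS, hxl⟩ := hDstem l hl
    have := hstm_eq l x (hDleaf l hl) hxl.symm
    exact ⟨this ▸ hxl.symm, this ▸ hxS⟩
  -- kept leaf neighbours
  set K : V → Set V := fun w => {y | G.Adj w y ∧ G.degree y = 1 ∧ y ∈ Dᶜ} with hK
  have hKDc : ∀ w, K w ⊆ Dᶜ := fun w y hy => hy.2.2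
  -- counting facts at stems
  have hKcard : ∀ x ∈ S, ((K x).ncard ≤ 2 ∧
      (2 ≤ (K x).ncard → ∀ p : List V, ¬(IsLeg G x p ∧ 2 ≤ p.length))) := by
    intro x hx
    have ht := hSLf x hx
    have hKeq : K x = Lf x \ (D ∩ Lf x) := by
      ext y
      simp only [hK, hLf, Set.mem_setOf_eq, Set.mem_diff, Set.mem_inter_iff, Set.mem_compl_iff]
      tauto
    have hKn : (K x).ncard = (Lf x).ncard - (D ∩ Lf x).ncard := by
      rw [hKeq, Set.ncard_diff Set.inter_subset_right (Set.toFinite _)]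
    have hcount : (D ∩ Lf x).ncard =
        (if 2 ≤ {p : List V | IsLeg G x p ∧ 2 ≤ p.length}.ncard then (Lf x).ncard
         else if {p : List V | IsLeg G x p ∧ 2 ≤ p.length}.ncard = 1 then (Lf x).ncard - 1
         else (Lf x).ncard - 2) := hDcount x hx
    have hlegfin : {p : List V | IsLeg G x p ∧ 2 ≤ p.length}.Finite := by
      apply Set.Finite.subset (List.finite_length_le (α := V) (n := Fintype.card V))
      intro p hp
      exact hp.1.2.1.length_le_card
    have hDLle : (D ∩ Lf x).ncard ≤ (Lf x).ncard :=
      Set.ncard_le_ncard Set.inter_subset_right (Set.toFinite _)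
    by_cases h2 : 2 ≤ {p : List V | IsLeg G x p ∧ 2 ≤ p.length}.ncard
    · rw [if_pos h2] at hcount
      constructor
      · omega
      · intro hge _
        omega
    · rw [if_neg h2] at hcount
      by_cases h1 : {p : List V | IsLeg G x p ∧ 2 ≤ p.length}.ncard = 1
      · rw [if_pos h1] at hcount
        constructor
        · omega
        · intro hge _
          omega
      · rw [if_neg h1] at hcount
        have hzero : {p : List V | IsLeg G x p ∧ 2 ≤ p.length}.ncard = 0 := by omega
        have hempty : {p : List V | IsLeg G x p ∧ 2 ≤ p.length} = ∅ :=
          (Set.ncard_eq_zero hlegfin).1 hzero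
        constructor
        · omega
        · intro _ p hp
          have : p ∈ {p : List V | IsLeg G x p ∧ 2 ≤ p.length} := hp
          rw [hempty] at this
          exact this
  -- the functions ψ₁ ψ₂ φ
  set ψ₁ : V → V := fun w => if h : (K w).Nonempty then h.some else if w ∈ D then stm w else w
    with hψ₁
  set ψ₂ : V → V := fun w => if h : ∃ y ∈ K w, y ≠ ψ₁ w then h.choose else ψ₁ w with hψ₂
  set φ : V → V := fun l => if l ∈ D then stm l else l with hφ
  set W₂ : Set V := {w | w ∈ W ∧ w ∈ Dᶜ ∧ w ∉ S ∧ 2 ≤ (K w).ncard} with hW₂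
  set R₀ : Set V := (φ '' L) ∪ (ψ₁ '' W) ∪ (ψ₂ '' W₂) with hR₀
  have hψ₁K : ∀ w, (K w).Nonempty → ψ₁ w ∈ K w := by
    intro w h
    simp only [hψ₁, dif_pos h]
    exact h.some_mem
  have hKD : ∀ w ∈ D, K w = ∅ := by
    intro w hw
    ext y
    simp only [hK, Set.mem_setOf_eq, Set.mem_empty_iff_false, iff_false]
    rintro ⟨hadj, hdeg, _⟩
    have h1 : stm w = y := hstm_eq w y (hDleaf w hw) hadj
    have h2 := (hstmD w hw).2
    have := hSdeg _ h2
    rw [h1] at this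
    omega
  have hψ₁D : ∀ w ∈ D, ψ₁ w = stm w := by
    intro w hw
    have : ¬ (K w).Nonempty := by rw [hKD w hw]; simp
    simp only [hψ₁, dif_neg this, if_pos hw]
  have hψ₁emp : ∀ w, w ∉ D → ¬(K w).Nonempty → ψ₁ w = w := by
    intro w hw h
    simp only [hψ₁, dif_neg h, if_neg hw]
  have hψ₂spec : ∀ w, 2 ≤ (K w).ncard → ψ₂ w ∈ K w ∧ ψ₂ w ≠ ψ₁ w := by
    intro w h
    obtain ⟨y1, hy1, y2, hy2, hne⟩ := (Set.one_lt_ncard (Set.toFinite (K w))).1 (by omega)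
    have hex : ∃ y ∈ K w, y ≠ ψ₁ w := by
      by_cases h1 : y1 = ψ₁ w
      · exact ⟨y2, hy2, fun hh => hne (h1 ▸ hh ▸ rfl)⟩
      · exact ⟨y1, hy1, h1⟩
    simp only [hψ₂, dif_pos hex]
    exact ⟨hex.choose_spec.1, hex.choose_spec.2⟩
  have hstmDc : ∀ l ∈ D, stm l ∈ Dᶜ := fun l hl => hSD (hstmD l hl).2
  have hψ₁Dc : ∀ w, ψ₁ w ∈ Dᶜ := by
    intro w
    by_cases h : (K w).Nonempty
    · exact hKDc w (hψ₁K w h)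
    · by_cases hw : w ∈ D
      · rw [hψ₁D w hw]
        exact hstmDc w hw
      · rw [hψ₁emp w hw h]
        exact hw
  have hψ₂Dc : ∀ w, ψ₂ w ∈ Dᶜ := by
    intro w
    by_cases h : ∃ y ∈ K w, y ≠ ψ₁ w
    · have : ψ₂ w ∈ K w := by simp only [hψ₂, dif_pos h]; exact h.choose_spec.1
      exact hKDc w this
    · have : ψ₂ w = ψ₁ w := by simp only [hψ₂, dif_neg h]
      rw [this]
      exact hψ₁Dc w
  have hR₀Dc : R₀ ⊆ Dᶜ := by
    rintro r ((⟨l, hl, rfl⟩ | ⟨w, hw, rfl⟩) | ⟨w, hw, rfl⟩)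
    · by_cases h : l ∈ D
      · simp only [hφ, if_pos h]
        exact hstmDc l h
      · simp only [hφ, if_neg h]
        exact h
    · exact hψ₁Dc w
    · exact hψ₂Dc w
  -- cardinality of R₀
  have hsize : R₀.ncard ≤ L.ncard + W.ncard + W₂.ncard := by
    calc R₀.ncard ≤ ((φ '' L) ∪ (ψ₁ '' W)).ncard + (ψ₂ '' W₂).ncard := Set.ncard_union_le _ _
      _ ≤ (φ '' L).ncard + (ψ₁ '' W).ncard + (ψ₂ '' W₂).ncard := by
          have := Set.ncard_union_le (φ '' L) (ψ₁ '' W)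
          omega
      _ ≤ L.ncard + W.ncard + W₂.ncard := by
          have h1 := Set.ncard_image_le (s := L) (f := φ) (Set.toFinite _)
          have h2 := Set.ncard_image_le (s := W) (f := ψ₁) (Set.toFinite _)
          have h3 := Set.ncard_image_le (s := W₂) (f := ψ₂) (Set.toFinite _)
          omega
  -- the charging argument
  have hcharge : S.ncard + W₂.ncard ≤ W.ncard + L.ncard := by
    have hball : ∀ x ∈ S, ∃ y, (y = x ∨ y ∈ Lf x) ∧ (y ∈ W ∨ y ∈ L) := by
      intro x hx
      obtain ⟨u1, hu1, u2, hu2, hne⟩ := (Set.one_lt_ncard (Set.toFinite (Lf x))).1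
        (by have := hSLf x hx; omega)
      obtain ⟨hxu1, hdu1⟩ := hu1
      obtain ⟨hxu2, hdu2⟩ := hu2
      rcases hWL u1 u2 hne with ⟨w', hw', hc⟩ | ⟨w', hw', hc⟩ | ⟨l, hl, hc⟩
      · rcases hc with h | hadj
        · exact ⟨u1, Or.inr ⟨hxu1, hdu1⟩, Or.inl (h ▸ hw')⟩
        · have hwx : w' = x := deg_one_unique hdu1 hadj.symm hxu1.symm
          exact ⟨x, Or.inl rfl, Or.inl (hwx ▸ hw')⟩
      · rcases hc with h | hadj
        · exact ⟨u2, Or.inr ⟨hxu2, hdu2⟩, Or.inl (h ▸ hw')⟩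
        · have hwx : w' = x := deg_one_unique hdu2 hadj.symm hxu2.symm
          exact ⟨x, Or.inl rfl, Or.inl (hwx ▸ hw')⟩
      · by_cases hlu : l = u1 ∨ l = u2
        · rcases hlu with rfl | rfl
          · exact ⟨l, Or.inr ⟨hxu1, hdu1⟩, Or.inr hl⟩
          · exact ⟨l, Or.inr ⟨hxu2, hdu2⟩, Or.inr hl⟩
        · exfalso
          push_neg at hlu
          have e1 : G.dist l u1 = G.dist l x + 1 := leaf_dist hT hdu1 hxu1.symm hlu.1
          have e2 : G.dist l u2 = G.dist l x + 1 := leaf_dist hT hdu2 hxu2.symm hlu.2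
          have c1 : G.dist u1 l = G.dist l u1 := SimpleGraph.dist_comm
          have c2 : G.dist u2 l = G.dist l u2 := SimpleGraph.dist_comm
          omega
    set e : V → V := fun x => if hx : x ∈ S then (hball x hx).choose else x with he
    have hespec : ∀ x ∈ S, (e x = x ∨ e x ∈ Lf x) ∧ (e x ∈ W ∨ e x ∈ L) := by
      intro x hx
      simp only [he, dif_pos hx]
      exact (hball x hx).choose_spec
    have hinj : Set.InjOn e S := by
      intro x1 hx1 x2 hx2 heq
      rcases (hespec x1 hx1).1 with h1 | h1 <;> rcases (hespec x2 hx2).1 with h2 | h2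
      · rw [← h1, ← h2, heq]
      · exfalso
        have : e x2 ∈ Lf x2 := h2
        rw [← heq, h1] at this
        have := this.2
        have := hSdeg x1 hx1
        omega
      · exfalso
        have : e x1 ∈ Lf x1 := h1
        rw [heq, h2] at this
        have := this.2
        have := hSdeg x2 hx2
        omega
      · exact deg_one_unique (h1.2) h1.1.symm (heq ▸ h2.1.symm)
    set E : Set V := e '' S with hE
    have hEcard : E.ncard = S.ncard := Set.ncard_image_of_injOn hinj
    have hdisj : Disjoint (E ∩ W) W₂ := by
      rw [Set.disjoint_left]
      rintro y ⟨⟨x, hxS, rfl⟩, _⟩ hyW₂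
      obtain ⟨_, _, hynotS, hyK⟩ := hyW₂
      rcases (hespec x hxS).1 with h1 | h1
      · exact hynotS (by rw [h1]; exact hxS)
      · obtain ⟨y1, hy1, y2, hy2, hne⟩ := (Set.one_lt_ncard (Set.toFinite (K (e x)))).1
          (by omega)
        have := deg_two_of_nbrs hy1.1 hy2.1 hne
        have := h1.2
        omega
    have h1 : (E ∩ W).ncard + (E \ W).ncard = E.ncard :=
      Set.ncard_inter_add_ncard_diff_eq_ncard E W (Set.toFinite E)
    have h2 : (E ∩ W).ncard + W₂.ncard = ((E ∩ W) ∪ W₂).ncard :=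
      (Set.ncard_union_eq hdisj (Set.toFinite _) (Set.toFinite _)).symm
    have h3 : ((E ∩ W) ∪ W₂).ncard ≤ W.ncard := by
      apply Set.ncard_le_ncard _ (Set.toFinite W)
      rintro y (⟨_, hy⟩ | hy)
      · exact hy
      · exact hy.1
    have h4 : (E \ W).ncard ≤ L.ncard := by
      apply Set.ncard_le_ncard _ (Set.toFinite L)
      rintro y ⟨⟨x, hxS, rfl⟩, hyW⟩
      rcases (hespec x hxS).2 with h | h
      · exact absurd h hyW
      · exact h
    omega
  -- the resolving property
  have hφR : ∀ l ∈ L, φ l ∈ R₀ := fun l hl => Or.inl (Or.inl ⟨l, hl, rfl⟩)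
  have hψ₁R : ∀ w ∈ W, ψ₁ w ∈ R₀ := fun w hw => Or.inl (Or.inr ⟨w, hw, rfl⟩)
  have hψ₂R : ∀ w ∈ W₂, ψ₂ w ∈ R₀ := fun w hw => Or.inr ⟨w, hw, rfl⟩
  have hres : ∀ a b : V, a ∈ Dᶜ → b ∈ Dᶜ → a ≠ b →
      ∃ r ∈ R₀, G.dist a r ≠ G.dist b r := by
    have hstep2 : ∀ a b : V, a ∈ Dᶜ → b ∈ Dᶜ → a ≠ b →
        (∀ r ∈ R₀, G.dist a r = G.dist b r) → Dominated G W a → False := by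
      intro a b ha hb hab h hdom
      obtain ⟨w, hwW, hwc⟩ := hdom
      by_cases hwD : w ∈ D
      · rcases hwc with rfl | hadj
        · exact ha hwD
        · have hstw : stm w = a := hstm_eq w a (hDleaf w hwD) hadj
          have haR : a ∈ R₀ := by
            have := hψ₁R w hwW
            rw [hψ₁D w hwD, hstw] at this
            exact this
          have h0 := h a haR
          rw [SimpleGraph.dist_self] at h0
          exact hab (hconn.dist_eq_zero_iff.1 h0.symm).symm
      · set s := ψ₁ w with hs
        have hsR : s ∈ R₀ := hψ₁R w hwW
        by_cases has : a = s
        · have h0 := h s hsR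
          rw [← has, SimpleGraph.dist_self] at h0
          exact hab (hconn.dist_eq_zero_iff.1 h0.symm).symm
        by_cases hbs : b = s
        · have h0 := h s hsR
          rw [← hbs, SimpleGraph.dist_self] at h0
          exact hab (hconn.dist_eq_zero_iff.1 h0)
        have haw : G.dist a w = G.dist b w := by
          by_cases hKne : (K w).Nonempty
          · have hsK := hψ₁K w hKne
            have e1 : G.dist a s = G.dist a w + 1 := leaf_dist hT hsK.2.1 hsK.1.symm has
            have e2 : G.dist b s = G.dist b w + 1 := leaf_dist hT hsK.2.1 hsK.1.symm hbs
            have h0 := h s hsR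
            omega
          · have hw_eq : s = w := hψ₁emp w hwD hKne
            have h0 := h s hsR
            rw [hw_eq] at h0
            exact h0
        by_cases haw' : a = w
        · rw [haw', SimpleGraph.dist_self] at haw
          exact hab (haw' ▸ (hconn.dist_eq_zero_iff.1 haw.symm).symm)
        have hadj_wa : G.Adj w a := by
          rcases hwc with h' | h'
          · exact absurd h'.symm haw'
          · exact h'
        have hdaw1 : G.dist a w = 1 := dist_eq_one_iff_adj.2 hadj_wa.symm
        have hadj_wb : G.Adj w b := (dist_eq_one_iff_adj.1 (haw ▸ hdaw1)).symm
        -- cleanliness of branches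
        have hclean : ∀ c d : V, G.Adj w c → G.Adj w d → c ≠ d → c ∈ Dᶜ →
            (∀ r ∈ R₀, G.dist c r = G.dist d r) → ∀ z ∈ Br G w c, z ∉ W ∧ z ∉ L := by
          intro c d hwc hwd hcd hcDc hcdr
          have hcontra_r : ∀ r, r ∈ Br G w c → r ∈ R₀ → False := by
            intro r hr hrR
            have hdBr : d ∉ Br G w c := fun hmem => hcd (Br_nbr_of_w hT hwc hmem hwd).symm
            have h1 : G.dist d r = G.dist d w + G.dist w r := dist_through_w hT hwc hdBr hr
            have h2 : G.dist r w = G.dist r c + 1 := hr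
            have h3 : G.dist d w = 1 := dist_eq_one_iff_adj.2 hwd.symm
            have h4 := hcdr r hrR
            have c1 : G.dist w r = G.dist r w := SimpleGraph.dist_comm
            have c2 : G.dist c r = G.dist r c := SimpleGraph.dist_comm
            omega
          have hstm_in : ∀ z ∈ Br G w c, z ∈ D → stm z ∈ Br G w c := by
            intro z hz hzD
            have hadj_z : G.Adj z (stm z) := (hstmD z hzD).1
            have hstw : stm z ≠ w := by
              intro hh
              have : G.Adj w z := by rw [← hh]; exact hadj_z.symm
              have := Br_nbr_of_w hT hwc hz this
              rw [this] at hzD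
              exact hcDc hzD
            exact mem_Br_of_adj hT hwc hz hadj_z.symm hstw
          intro z hz
          constructor
          · intro hzW
            by_cases hzD : z ∈ D
            · have hr : ψ₁ z ∈ Br G w c := by rw [hψ₁D z hzD]; exact hstm_in z hz hzD
              exact hcontra_r (ψ₁ z) hr (hψ₁R z hzW)
            · by_cases hKz : (K z).Nonempty
              · have hψK := hψ₁K z hKz
                have hne_w : ψ₁ z ≠ w := by
                  intro hh
                  have : G.degree w = 1 := by rw [← hh]; exact hψK.2.1
                  have := deg_two_of_nbrs hwc hwd hcd
                  omega
                have hr : ψ₁ z ∈ Br G w c := mem_Br_of_adj hT hwc hz hψK.1.symm hne_w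
                exact hcontra_r (ψ₁ z) hr (hψ₁R z hzW)
              · have : ψ₁ z = z := hψ₁emp z hzD hKz
                exact hcontra_r z hz (this ▸ hψ₁R z hzW)
          · intro hzL
            by_cases hzD : z ∈ D
            · have hr : φ z ∈ Br G w c := by
                simp only [hφ, if_pos hzD]
                exact hstm_in z hz hzD
              exact hcontra_r (φ z) hr (hφR z hzL)
            · have : φ z = z := by simp only [hφ, if_neg hzD]
              exact hcontra_r z hz (this ▸ hφR z hzL)
        have hcleanA := hclean a b hadj_wa hadj_wb hab ha h
        have hcleanB := hclean b a hadj_wb hadj_wa (Ne.symm hab) hb (fun r hr => (h r hr).symm)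
        -- unique vertex at each level of a clean branch
        have hsing : ∀ c : V, G.Adj w c → (∀ z ∈ Br G w c, z ∉ W ∧ z ∉ L) →
            ∀ z₁ z₂, z₁ ∈ Br G w c → z₂ ∈ Br G w c → G.dist w z₁ = G.dist w z₂ → z₁ = z₂ := by
          intro c hwc hcl z₁ z₂ h₁ h₂ hdd
          by_contra hne
          have hdomBr : ∀ z z' , z ∈ Br G w c → z' ∈ Br G w c → G.dist w z = G.dist w z' →
              z ≠ z' → ¬ Dominated G W z := by
            intro z z' hzBr hz'Br hzz' hnzz hdomz
            obtain ⟨w', hw', hc⟩ := hdomz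
            rcases hc with hh | hadj
            · exact (hcl z hzBr).1 (hh ▸ hw')
            · by_cases hww' : w' = w
              · have hzc : z = c := Br_nbr_of_w hT hwc hzBr (hww' ▸ hadj)
                have hd1 : G.dist w z = 1 := by
                  rw [hzc]
                  exact (dist_eq_one_iff_adj.2 hwc).symm ▸ dist_eq_one_iff_adj.2 hwc
                have hz'c : z' = c := Br_nbr_of_w hT hwc hz'Br (dist_eq_one_iff_adj.1 (by omega))
                exact hnzz (hzc ▸ hz'c ▸ rfl)
              · exact (hcl w' (mem_Br_of_adj hT hwc hzBr hadj hww')).1 hw'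
          rcases hWL z₁ z₂ hne with hdz | hdz | ⟨l, hl, hc⟩
          · exact hdomBr z₁ z₂ h₁ h₂ hdd hne hdz
          · exact hdomBr z₂ z₁ h₂ h₁ hdd.symm (Ne.symm hne) hdz
          · by_cases hlBr : l ∈ Br G w c
            · exact (hcl l hlBr).2 hl
            · have e1 : G.dist l z₁ = G.dist l w + G.dist w z₁ := dist_through_w hT hwc hlBr h₁
              have e2 : G.dist l z₂ = G.dist l w + G.dist w z₂ := dist_through_w hT hwc hlBr h₂
              have c1 : G.dist z₁ l = G.dist l z₁ := SimpleGraph.dist_comm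
              have c2 : G.dist z₂ l = G.dist l z₂ := SimpleGraph.dist_comm
              omega
        -- two deep branches are impossible
        have hdeepdeep : ¬((∃ z ∈ Br G w a, 2 ≤ G.dist w z) ∧
            (∃ z ∈ Br G w b, 2 ≤ G.dist w z)) := by
          rintro ⟨⟨za, hza, hza2⟩, ⟨zb, hzb, hzb2⟩⟩
          obtain ⟨pa, hpa, hpa2⟩ :=
            exists_depth hT hadj_wa (G.dist w za) za hza rfl 2 (by omega) hza2
          obtain ⟨pb, hpb, hpb2⟩ :=
            exists_depth hT hadj_wb (G.dist w zb) zb hzb rfl 2 (by omega) hzb2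
          have hne : pa ≠ pb := by
            intro hh
            exact Br_disjoint hT hadj_wa hadj_wb hab hpa (hh ▸ hpb)
          have hdomdeep : ∀ (c : V) (hwc : G.Adj w c) (hclc : ∀ z ∈ Br G w c, z ∉ W ∧ z ∉ L)
              (p : V), p ∈ Br G w c → G.dist w p = 2 → ¬ Dominated G W p := by
            intro c hwc hclc p hp hp2 hdomp
            obtain ⟨w', hw', hcc⟩ := hdomp
            rcases hcc with hh | hadj
            · exact (hclc p hp).1 (hh ▸ hw')
            · by_cases hww' : w' = w
              · have : p = c := Br_nbr_of_w hT hwc hp (hww' ▸ hadj)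
                have : G.dist w p = 1 := by
                  rw [this]
                  exact dist_eq_one_iff_adj.2 hwc
                omega
              · exact (hclc w' (mem_Br_of_adj hT hwc hp hadj hww')).1 hw'
          rcases hWL pa pb hne with hdz | hdz | ⟨l, hl, hc⟩
          · exact hdomdeep a hadj_wa hcleanA pa hpa hpa2 hdz
          · exact hdomdeep b hadj_wb hcleanB pb hpb hpb2 hdz
          · have hlBa : l ∉ Br G w a := fun hh => (hcleanA l hh).2 hl
            have hlBb : l ∉ Br G w b := fun hh => (hcleanB l hh).2 hl
            have e1 : G.dist l pa = G.dist l w + G.dist w pa := dist_through_w hT hadj_wa hlBa hpa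
            have e2 : G.dist l pb = G.dist l w + G.dist w pb := dist_through_w hT hadj_wb hlBb hpb
            have c1 : G.dist pa l = G.dist l pa := SimpleGraph.dist_comm
            have c2 : G.dist pb l = G.dist l pb := SimpleGraph.dist_comm
            omega
        -- the final case analysis
        have hstep3 : ∀ c d : V, G.Adj w c → G.Adj w d → c ≠ d → c ∈ Dᶜ → d ∈ Dᶜ →
            c ≠ s → d ≠ s → (∀ r ∈ R₀, G.dist c r = G.dist d r) →
            (∀ z ∈ Br G w d, z ∉ W ∧ z ∉ L) →
            (¬ ∃ z ∈ Br G w c, 2 ≤ G.dist w z) → False := by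
          intro c d hwc hwd hcd hcDc hdDc hcs hds hcdr hcleand hshal
          obtain ⟨hBrc, hdegc⟩ := shallow_Br hT hwc hshal
          have hcK : c ∈ K w := ⟨hwc, hdegc, hcDc⟩
          have hKne : (K w).Nonempty := ⟨c, hcK⟩
          have hsK : s ∈ K w := hψ₁K w hKne
          have hdeg3 : 3 ≤ G.degree w := deg_three_of_nbrs hwc hwd hsK.1 hcd hcs hds
          by_cases hdd : ∃ z ∈ Br G w d, 2 ≤ G.dist w z
          · have hsingd := hsing d hwd hcleand
            obtain ⟨p, hleg, hlen⟩ := branch_is_leg hT hwd hsingd hdd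
            have h2K : 2 ≤ (K w).ncard := by
              have := (Set.one_lt_ncard (Set.toFinite (K w))).2 ⟨c, hcK, s, hsK, hcs⟩
              omega
            by_cases hwS : w ∈ S
            · exact (hKcard w hwS).2 h2K p ⟨hleg, hlen⟩
            · have hwW₂ : w ∈ W₂ := ⟨hwW, hwD, hwS, h2K⟩
              have hψ₂s := hψ₂spec w h2K
              have hLf3 : ¬ 3 ≤ (Lf w).ncard := fun hcon3 => hwS (by rw [hS]; exact ⟨hdeg3, hcon3⟩)
              have hKLf : K w ⊆ Lf w := fun y hy => ⟨hy.1, hy.2.1⟩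
              have hK2 : (K w).ncard ≤ 2 := by
                have := Set.ncard_le_ncard hKLf (Set.toFinite _)
                omega
              have hceq : c = ψ₂ w := by
                by_contra hne
                have hsub : ({c, s, ψ₂ w} : Set V) ⊆ K w := by
                  rintro y (rfl | rfl | rfl)
                  · exact hcK
                  · exact hsK
                  · exact hψ₂s.1
                have hc3 : ({c, s, ψ₂ w} : Set V).ncard = 3 := by
                  rw [Set.ncard_insert_of_notMem (by simp [hcs, hne]),
                    Set.ncard_insert_of_notMem (by
                      simp only [Set.mem_singleton_iff]
                      exact fun hh => hψ₂s.2 hh.symm),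
                    Set.ncard_singleton]
                have := Set.ncard_le_ncard hsub (Set.toFinite _)
                omega
              have hcR : c ∈ R₀ := hceq ▸ hψ₂R w hwW₂
              have h0 := hcdr c hcR
              rw [SimpleGraph.dist_self] at h0
              exact hcd ((hconn.dist_eq_zero_iff.1 h0.symm).symm)
          · obtain ⟨hBrd, hdegd⟩ := shallow_Br hT hwd hdd
            have hdK : d ∈ K w := ⟨hwd, hdegd, hdDc⟩
            have h3 : 3 ≤ (K w).ncard := by
              have hsub : ({c, d, s} : Set V) ⊆ K w := by
                rintro y (rfl | rfl | rfl)
                · exact hcK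
                · exact hdK
                · exact hsK
              have hc3 : ({c, d, s} : Set V).ncard = 3 := by
                rw [Set.ncard_insert_of_notMem (by simp [hcd, hcs]),
                  Set.ncard_insert_of_notMem (by simp [hds]),
                  Set.ncard_singleton]
              have := Set.ncard_le_ncard hsub (Set.toFinite _)
              omega
            by_cases hwS : w ∈ S
            · have := (hKcard w hwS).1
              omega
            · have hLf3 : ¬ 3 ≤ (Lf w).ncard := fun hcon3 => hwS (by rw [hS]; exact ⟨hdeg3, hcon3⟩)
              have hKLf : K w ⊆ Lf w := fun y hy => ⟨hy.1, hy.2.1⟩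
              have := Set.ncard_le_ncard hKLf (Set.toFinite _)
              omega
        by_cases hda : ∃ z ∈ Br G w a, 2 ≤ G.dist w z
        · by_cases hdb : ∃ z ∈ Br G w b, 2 ≤ G.dist w z
          · exact hdeepdeep ⟨hda, hdb⟩
          · exact hstep3 b a hadj_wb hadj_wa (Ne.symm hab) hb ha hbs has
              (fun r hr => (h r hr).symm) hcleanA hdb
        · exact hstep3 a b hadj_wa hadj_wb hab ha hb has hbs h hcleanB hda
    intro a b ha hb hab
    by_contra hcon
    push_neg at hcon
    rcases hWL a b hab with hdom | hdom | ⟨l, hl, hne⟩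
    · exact hstep2 a b ha hb hab hcon hdom
    · exact hstep2 b a hb ha (Ne.symm hab) (fun r hr => (hcon r hr).symm) hdom
    · by_cases hlD : l ∈ D
      · have hphil : φ l = stm l := by simp only [hφ, if_pos hlD]
        have hal : a ≠ l := fun hh => ha (hh ▸ hlD)
        have hbl : b ≠ l := fun hh => hb (hh ▸ hlD)
        have e1 : G.dist a l = G.dist a (stm l) + 1 :=
          leaf_dist hT (hDleaf l hlD) (hstmD l hlD).1 hal
        have e2 : G.dist b l = G.dist b (stm l) + 1 :=
          leaf_dist hT (hDleaf l hlD) (hstmD l hlD).1 hbl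
        have h0 := hcon (φ l) (hφR l hl)
        rw [hphil] at h0
        omega
      · have hphil : φ l = l := by simp only [hφ, if_neg hlD]
        have h0 := hcon (φ l) (hφR l hl)
        rw [hphil] at h0
        exact hne h0
  exact ⟨R₀, hR₀Dc, hres, by omega⟩


end Main

/-- The 2-approximation on trees: letting `S` be the set of t-stems with t ≥ 3 and `R`
an optimal resolving set of the tree `T′` obtained by the prescribed leaf deletions,
the pair (S, R) is a detection pair of `T` of size at most 2·DP(T). -/
theorem stmt15 [Fintype V] (G : SimpleGraph V) [DecidableRel G.Adj]
    (hT : G.IsTree) (hn : 2 ≤ Fintype.card V)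
    (S : Set V)
    (hS : S = {x | 3 ≤ G.degree x ∧ 3 ≤ {y | G.Adj x y ∧ G.degree y = 1}.ncard})
    (D : Set V)
    (hDsub : D ⊆ {y | ∃ x ∈ S, G.Adj x y ∧ G.degree y = 1})
    (hDcount : ∀ x ∈ S,
      (D ∩ {y | G.Adj x y ∧ G.degree y = 1}).ncard =
        (if 2 ≤ {p | IsLeg G x p ∧ 2 ≤ p.length}.ncard then
            {y | G.Adj x y ∧ G.degree y = 1}.ncard
          else if {p | IsLeg G x p ∧ 2 ≤ p.length}.ncard = 1 then
            {y | G.Adj x y ∧ G.degree y = 1}.ncard - 1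
          else {y | G.Adj x y ∧ G.degree y = 1}.ncard - 2))
    (R : Set ↥(Dᶜ)) (hR : IsResolving (G.induce Dᶜ) R)
    (hRopt : R.ncard = MD (G.induce Dᶜ)) :
    IsDetectionPair G S (Subtype.val '' R) ∧ S.ncard + R.ncard ≤ 2 * DP G := by
  classical
  have hconn := hT.isConnected
  have hcompl : ∀ v, v ∉ Dᶜ → G.degree v ≤ 1 := by
    intro v hv
    simp only [Set.mem_compl_iff, not_not] at hv
    exact le_of_eq ((hDsub hv).choose_spec.2.2)
  have hDom : ∀ u ∈ D, Dominated G S u := by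
    intro u hu
    obtain ⟨x, hx, hadj, _⟩ := hDsub hu
    exact ⟨x, hx, Or.inr hadj⟩
  constructor
  · intro u v huv
    by_cases hu : u ∈ D
    · exact Or.inl (hDom u hu)
    by_cases hv : v ∈ D
    · exact Or.inr (Or.inl (hDom v hv))
    · right; right
      have hne : (⟨u, hu⟩ : ↥(Dᶜ)) ≠ ⟨v, hv⟩ := fun hh => huv (congrArg Subtype.val hh)
      obtain ⟨l, hl, hld⟩ := hR _ _ hne
      refine ⟨l.1, ⟨l, hl, rfl⟩, ?_⟩
      have e1 := induce_dist_eq hT Dᶜ hcompl (x := u) (y := l.1) hu l.2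
      have e2 := induce_dist_eq hT Dᶜ hcompl (x := v) (y := l.1) hv l.2
      intro hh
      exact hld (e1.trans (hh.trans e2.symm))
  · have hDPmem : DP G ∈ {n | ∃ W L : Set V, IsDetectionPair G W L ∧ W.ncard + L.ncard = n} := by
      apply Nat.sInf_mem
      exact ⟨Set.univ.ncard + (∅ : Set V).ncard, Set.univ, ∅,
        fun u v h => Or.inl ⟨u, Set.mem_univ u, Or.inl rfl⟩, rfl⟩
    obtain ⟨W, L, hWL, hcard⟩ := hDPmem
    obtain ⟨R₀, hsub, hres, hsize⟩ := key G hT S hS D hDsub hDcount W L hWL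
    set R₀' : Set ↥(Dᶜ) := Subtype.val ⁻¹' R₀ with hR₀'
    have hres' : IsResolving (G.induce Dᶜ) R₀' := by
      intro u v huv
      have hne : u.1 ≠ v.1 := fun hh => huv (Subtype.ext hh)
      obtain ⟨r, hr, hrd⟩ := hres u.1 v.1 u.2 v.2 hne
      refine ⟨⟨r, hsub hr⟩, hr, ?_⟩
      have e1 := induce_dist_eq hT Dᶜ hcompl (x := u.1) (y := r) u.2 (hsub hr)
      have e2 := induce_dist_eq hT Dᶜ hcompl (x := v.1) (y := r) v.2 (hsub hr)
      intro hh
      exact hrd (e1.symm.trans (hh.trans e2))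
    have hMD : MD (G.induce Dᶜ) ≤ R₀'.ncard := Nat.sInf_le ⟨R₀', hres', rfl⟩
    have hR₀'card : R₀'.ncard ≤ R₀.ncard := by
      have h1 : R₀'.ncard = (Subtype.val '' R₀').ncard :=
        (Set.ncard_image_of_injective _ Subtype.val_injective).symm
      have h2 : Subtype.val '' R₀' ⊆ R₀ := by rintro r ⟨x, hx, rfl⟩; exact hx
      rw [h1]
      exact Set.ncard_le_ncard h2 (Set.toFinite _)
    rw [hRopt]
    omega

end DetPair
end
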